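/- arXiv:1408.6216 — 4 statements merged into one kernel-verified Lean document; each statement's English description precedes it below -/
import Mathlib

section
/- Let n = 2m with m ≥ 2, let P_n be the regular n-gon, let a = cos(π/n), w = 2a, â = (cos(π/n), sin(π/n)) (the unit outward normal to the edge with midpoint m₁ = a·â), and let 0 ≤ t ≤ w. Set p = m₁ − t·â and q = −m₁ + t·â (a symmetric pair of points on the segment joining the midpoints m₁ and −m₁ of two parallel edges). Then every point z in the frontier ∂P_n of P_n satisfies ‖z − p‖ + ‖z − q‖ ≥ w. (The ellipse with foci p, q and major axis length w is inscribed in the n-gon, tangent along its major axis, so all boundary points are at combined distance at least w from p and q.) -/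
open Real

noncomputable section

/-- The Euclidean plane. -/
abbrev E2 : Type := EuclideanSpace ℝ (Fin 2)

/-- The point `(x, y)` in the Euclidean plane. -/
def pt (x y : ℝ) : E2 := WithLp.toLp 2 ![x, y]

/-- The regular `n`-gon: the convex hull of the `n`-th roots of unity. -/
def Pgon (n : ℕ) : Set E2 :=
  convexHull ℝ
    (Set.range fun k : Fin n => pt (Real.cos (2 * π * k / n)) (Real.sin (2 * π * k / n)))

/-- The pseudometric of the double of a plane set `P`: two points on the same
face are at their Euclidean distance, while points on opposite faces are at
the infimum over boundary points `z ∈ ∂P` of `‖x - z‖ + ‖z - y‖`. -/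
def doubleDist (P : Set E2) (p q : Bool × E2) : ℝ :=
  if p.1 = q.1 then ‖p.2 - q.2‖
  else sInf ((fun z => ‖p.2 - z‖ + ‖z - q.2‖) '' frontier P)

/-- The unit outward normal to the `k`-th edge of the regular `n`-gon. -/
def outNormal (n k : ℕ) : E2 :=
  pt (Real.cos ((2 * k + 1) * π / n)) (Real.sin ((2 * k + 1) * π / n))

/-- The `k`-th meridian of the double of the regular `n`-gon (`n` even),
periodic of period `2w` where `w = 2 cos(π/n)`: it runs through the center of
the top face from the midpoint `m_k = a • â_k` of the `k`-th edge to the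
midpoint of the opposite edge, then back through the bottom face. -/
def meridian (n k : ℕ) (t : ℝ) : Bool × E2 :=
  let a := Real.cos (π / n)
  let w := 2 * a
  let t' := t - 2 * w * (⌊t / (2 * w)⌋ : ℝ)
  if t' < w then (false, a • outNormal n k - t' • outNormal n k)
  else (true, -(a • outNormal n k) + (t' - w) • outNormal n k)

lemma triX (h δ φ r : ℝ) :
    Real.sin (2*h) * (r * Real.cos (φ + h + δ)) =
      r * Real.sin (h - δ) * Real.cos φ + r * Real.sin (h + δ) * Real.cos (φ + 2*h) := by
  rw [show φ + 2*h = φ + h + h by ring, show (2:ℝ)*h = h + h by ring]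
  simp only [Real.sin_add, Real.cos_add, Real.sin_sub, Real.cos_sub]
  linear_combination r * Real.cos φ * (Real.sin h * Real.cos δ - Real.cos h * Real.sin δ) * (Real.sin_sq_add_cos_sq h)

lemma triY (h δ φ r : ℝ) :
    Real.sin (2*h) * (r * Real.sin (φ + h + δ)) =
      r * Real.sin (h - δ) * Real.sin φ + r * Real.sin (h + δ) * Real.sin (φ + 2*h) := by
  rw [show φ + 2*h = φ + h + h by ring, show (2:ℝ)*h = h + h by ring]
  simp only [Real.sin_add, Real.cos_add, Real.sin_sub, Real.cos_sub]
  linear_combination r * Real.sin φ * (Real.sin h * Real.cos δ - Real.cos h * Real.sin δ) * (Real.sin_sq_add_cos_sq h)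

-- vertex membership for any integer index
lemma vert_mem (n : ℕ) (hn : 0 < n) (j : ℤ) :
    pt (Real.cos (2 * π * j / n)) (Real.sin (2 * π * j / n)) ∈ Pgon n := by
  have hn' : (0:ℤ) < n := by exact_mod_cast hn
  set k : ℕ := (j % n).toNat with hk
  have hk0 : (0:ℤ) ≤ j % n := Int.emod_nonneg j (by positivity)
  have hkn : j % n < n := Int.emod_lt_of_pos j hn'
  have hklt : k < n := by omega
  have hkr : ((k:ℕ):ℝ) = ((j % n : ℤ) : ℝ) := by
    rw [hk]; exact_mod_cast congrArg (Int.cast : ℤ → ℝ) (Int.toNat_of_nonneg hk0)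
  have hang : 2 * π * (j:ℝ) / n = 2 * π * (k:ℝ) / n + ((j / n : ℤ) : ℝ) * (2 * π) := by
    have : (j:ℝ) = ((j % n : ℤ):ℝ) + ((j / n : ℤ):ℝ) * n := by
      push_cast [Int.emod_def]; ring
    rw [this, hkr]
    field_simp
  have : pt (Real.cos (2 * π * j / n)) (Real.sin (2 * π * j / n))
      = pt (Real.cos (2 * π * (k:ℝ) / n)) (Real.sin (2 * π * (k:ℝ) / n)) := by
    rw [hang, Real.cos_add_int_mul_two_pi, Real.sin_add_int_mul_two_pi]
  rw [this]
  exact subset_convexHull ℝ _ ⟨⟨k, hklt⟩, rfl⟩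

lemma zero_mem (m n : ℕ) (hm : 1 ≤ m) (hn : n = 2 * m) : (0 : E2) ∈ Pgon n := by
  have hn0 : 0 < n := by omega
  have h0 : pt 1 0 ∈ Pgon n := by
    have := vert_mem n hn0 0
    simpa using this
  have hm' : pt (-1) 0 ∈ Pgon n := by
    have := vert_mem n hn0 m
    have hang : 2 * π * (((m:ℤ)):ℝ) / n = π := by
      push_cast
      have : (n:ℝ) = 2 * m := by exact_mod_cast hn
      rw [this]
      have : (m:ℝ) ≠ 0 := by positivity
      field_simp
    rwa [hang, Real.cos_pi, Real.sin_pi] at this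
  have := (convex_convexHull ℝ _) h0 hm' (by norm_num : (0:ℝ) ≤ 1/2) (by norm_num : (0:ℝ) ≤ 1/2) (by norm_num)
  have hz : (1/2 : ℝ) • pt 1 0 + (1/2 : ℝ) • pt (-1) 0 = (0 : E2) := by
    ext i; fin_cases i <;> simp [pt]
  rwa [hz] at this

lemma ball_subset (m n : ℕ) (hm : 2 ≤ m) (hn : n = 2 * m) :
    Metric.ball (0 : E2) (Real.cos (π / n)) ⊆ Pgon n := by
  have hn0 : 0 < n := by omega
  have hn4 : 4 ≤ n := by omega
  have hnr : (4:ℝ) ≤ n := by exact_mod_cast hn4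
  have hnpos : (0:ℝ) < n := by linarith
  have hπn0 : 0 < π / n := by positivity
  have hπn : π / n ≤ π / 4 := by
    apply div_le_div_of_nonneg_left pi_pos.le (by norm_num) hnr -- maybe wrong name
  intro z hz
  have hr' : ‖z‖ < Real.cos (π / n) := by
    simpa [mem_ball_zero_iff] using hz
  set r : ℝ := ‖z‖ with hrdef
  have hr0 : 0 ≤ r := norm_nonneg z
  by_cases hz0 : z = 0
  · rw [hz0]; exact zero_mem m n (by omega) hn
  · -- complex representation
    set ζ : ℂ := ⟨z 0, z 1⟩ with hζ
    have hζ0 : ζ ≠ 0 := by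
      intro h
      apply hz0
      have h0 : z 0 = 0 := congrArg Complex.re h
      have h1 : z 1 = 0 := congrArg Complex.im h
      ext i; fin_cases i <;> simpa
    have habs : ‖ζ‖ = r := by
      rw [hrdef, EuclideanSpace.norm_eq, Complex.norm_def, Complex.normSq_mk]
      congr 1
      rw [Fin.sum_univ_two]
      simp [Real.norm_eq_abs, sq_abs]
      ring
    set ψ : ℝ := ζ.arg with hψ
    have hr0' : r ≠ 0 := by
      intro h; exact hz0 (norm_eq_zero.mp (by rw [← hrdef, h]))
    have hz0c : z 0 = r * Real.cos ψ := by
      have h := Complex.cos_arg hζ0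
      rw [habs] at h
      have hre : ζ.re = z 0 := rfl
      rw [hψ, h, hre]
      field_simp
    have hz1c : z 1 = r * Real.sin ψ := by
      have h := Complex.sin_arg ζ
      rw [habs] at h
      have him : ζ.im = z 1 := rfl
      rw [hψ, h, him]
      field_simp
    -- choose the sector
    set k : ℤ := ⌊ψ * n / (2 * π)⌋ with hk
    obtain ⟨φ, hφ⟩ : ∃ x : ℝ, x = 2 * π * k / n := ⟨_, rfl⟩
    obtain ⟨δ, hδ⟩ : ∃ x : ℝ, x = ψ - φ - π / n := ⟨_, rfl⟩
    have hfl1 : (k:ℝ) ≤ ψ * n / (2 * π) := Int.floor_le _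
    have hfl2 : ψ * n / (2 * π) < k + 1 := Int.lt_floor_add_one _
    have h2π : (0:ℝ) < 2 * π := by positivity
    rw [le_div_iff₀ h2π] at hfl1
    rw [div_lt_iff₀ h2π] at hfl2
    have hδl : -(π/n) ≤ δ := by
      have hkψ : 2 * π * k / n ≤ ψ := by
        rw [div_le_iff₀ hnpos]; nlinarith
      rw [hδ, hφ]; linarith
    have hδu : δ ≤ π/n := by
      rw [hδ, hφ]
      have : ψ ≤ 2 * π * (k+1) / n := by
        rw [le_div_iff₀ hnpos]
        nlinarith
      have h2 : 2 * π * (k+1) / n = 2 * π * k / n + 2 * (π / n) := by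
        field_simp
      linarith
    -- positivity facts
    have hsπ : 0 < Real.sin (π/n) := Real.sin_pos_of_pos_of_lt_pi hπn0 (by linarith [Real.pi_pos])
    have hcπ : 0 < Real.cos (π/n) := Real.cos_pos_of_mem_Ioo ⟨by linarith [Real.pi_pos], by linarith [Real.pi_pos]⟩
    have hsin2 : 0 < Real.sin (2*(π/n)) := by
      rw [Real.sin_two_mul]; positivity
    obtain ⟨α, hαd⟩ : ∃ x : ℝ, x = r * Real.sin (π/n - δ) / Real.sin (2*(π/n)) := ⟨_, rfl⟩
    obtain ⟨β, hβd⟩ : ∃ x : ℝ, x = r * Real.sin (π/n + δ) / Real.sin (2*(π/n)) := ⟨_, rfl⟩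
    have hα : 0 ≤ α := by
      rw [hαd]
      apply div_nonneg _ hsin2.le
      apply mul_nonneg hr0
      apply Real.sin_nonneg_of_nonneg_of_le_pi (by linarith) (by linarith [Real.pi_pos])
    have hβ : 0 ≤ β := by
      rw [hβd]
      apply div_nonneg _ hsin2.le
      apply mul_nonneg hr0
      apply Real.sin_nonneg_of_nonneg_of_le_pi (by linarith) (by linarith [Real.pi_pos])
    have hαβ : α + β ≤ 1 := by
      have hs : Real.sin (π/n - δ) + Real.sin (π/n + δ) = 2 * Real.sin (π/n) * Real.cos δ := by
        rw [Real.sin_sub, Real.sin_add]; ring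
      have h1 : α + β = r * Real.cos δ / Real.cos (π/n) := by
        rw [hαd, hβd, ← add_div, Real.sin_two_mul]
        rw [show r * Real.sin (π/n - δ) + r * Real.sin (π/n + δ)
            = r * (Real.sin (π/n - δ) + Real.sin (π/n + δ)) by ring, hs]
        field_simp
      rw [h1, div_le_one hcπ]
      nlinarith [Real.cos_le_one δ]
    -- the two vertices
    set V1 : E2 := pt (Real.cos (2 * π * (k:ℝ) / n)) (Real.sin (2 * π * (k:ℝ) / n)) with hV1
    set V2 : E2 := pt (Real.cos (2 * π * ((k:ℝ)+1) / n)) (Real.sin (2 * π * ((k:ℝ)+1) / n)) with hV2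
    have hV1m : V1 ∈ Pgon n := vert_mem n hn0 k
    have hV2m : V2 ∈ Pgon n := by
      have := vert_mem n hn0 (k+1)
      push_cast at this
      exact this
    have h0m : (0:E2) ∈ Pgon n := zero_mem m n (by omega) hn
    -- z as a convex combination
    have hψeq : ψ = φ + π/n + δ := by rw [hδ]; ring
    have hang2 : 2 * π * ((k:ℝ)+1) / n = φ + 2*(π/n) := by
      rw [hφ]; field_simp
    have hzeq : z = α • V1 + β • V2 := by
      have hφk : 2 * π * (k:ℝ) / n = φ := hφ.symm
      ext i
      fin_cases i
      · show z 0 = (α • V1 + β • V2) 0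
        have happ : (α • V1 + β • V2) 0 = α * Real.cos (2 * π * (k:ℝ) / n)
            + β * Real.cos (2 * π * ((k:ℝ)+1) / n) := by
          simp [hV1, hV2, pt]
        rw [happ, hz0c, hψeq, hang2, hαd, hβd, hφk,
          div_mul_eq_mul_div, div_mul_eq_mul_div, ← add_div,
          eq_div_iff (ne_of_gt hsin2)]
        linear_combination triX (π/n) δ φ r
      · show z 1 = (α • V1 + β • V2) 1
        have happ : (α • V1 + β • V2) 1 = α * Real.sin (2 * π * (k:ℝ) / n)
            + β * Real.sin (2 * π * ((k:ℝ)+1) / n) := by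
          simp [hV1, hV2, pt]
        rw [happ, hz1c, hψeq, hang2, hαd, hβd, hφk,
          div_mul_eq_mul_div, div_mul_eq_mul_div, ← add_div,
          eq_div_iff (ne_of_gt hsin2)]
        linear_combination triY (π/n) δ φ r
    have hsum := (convex_convexHull ℝ _).sum_mem (t := (Finset.univ : Finset (Fin 3)))
      (w := ![α, β, 1 - α - β]) (z := ![V1, V2, 0])
      (by intro i _; fin_cases i <;> simp [hα, hβ] <;> linarith)
      (by rw [Fin.sum_univ_three]; simp)
      (by intro i _; fin_cases i <;> simpa [Pgon])
    rw [Fin.sum_univ_three] at hsum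
    simp only [Matrix.cons_val_zero, Matrix.cons_val_one, Matrix.head_cons,
      Matrix.cons_val_two, Matrix.tail_cons, smul_zero, add_zero] at hsum
    rw [hzeq]
    exact hsum

set_option maxHeartbeats 1000000 in
/-- Inscribed-ellipse inequality in the regular `n`-gon (`n = 2m` even):
for a symmetric pair of points `p = m₁ - t•â`, `q = -m₁ + t•â` on the
segment joining midpoints of parallel edges, every frontier point `z` of the
`n`-gon satisfies `‖z - p‖ + ‖z - q‖ ≥ w`, where `w = 2 cos(π/n)` is the
width between parallel edges. -/
theorem ellipse_inscribed_in_even_polygon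
    (m n : ℕ) (hm : 2 ≤ m) (hn : n = 2 * m)
    (a w : ℝ) (ha : a = Real.cos (π / n)) (hw : w = 2 * a)
    (ahat : E2) (hahat : ahat = pt (Real.cos (π / n)) (Real.sin (π / n)))
    (t : ℝ) (ht0 : 0 ≤ t) (htw : t ≤ w)
    (p q : E2) (hp : p = a • ahat - t • ahat) (hq : q = -(a • ahat) + t • ahat) :
    ∀ z ∈ frontier (Pgon n), w ≤ ‖z - p‖ + ‖z - q‖ := by
  intro z hz
  have hn0 : 0 < n := by omega
  have hn4 : 4 ≤ n := by omega
  have hnr : (4:ℝ) ≤ n := by exact_mod_cast hn4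
  have hπn0 : 0 < π / n := by positivity
  have hπn : π / n ≤ π / 4 := by
    apply div_le_div_of_nonneg_left pi_pos.le (by norm_num) hnr
  have ha0 : 0 < a := by
    rw [ha]
    exact Real.cos_pos_of_mem_Ioo ⟨by linarith [Real.pi_pos], by linarith [Real.pi_pos]⟩
  -- the frontier point is outside the inscribed ball
  have hzint : z ∉ interior (Pgon n) := hz.2
  have hrge : a ≤ ‖z‖ := by
    by_contra hlt
    push_neg at hlt
    apply hzint
    apply interior_maximal (ball_subset m n hm hn) Metric.isOpen_ball
    rw [mem_ball_zero_iff, ← ha]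
    exact hlt
  -- norm of the unit normal
  have hna : ‖ahat‖ = 1 := by
    rw [hahat, EuclideanSpace.norm_eq, Fin.sum_univ_two]
    have h0 : (pt (Real.cos (π / n)) (Real.sin (π / n))) 0 = Real.cos (π / n) := by simp [pt]
    have h1 : (pt (Real.cos (π / n)) (Real.sin (π / n))) 1 = Real.sin (π / n) := by simp [pt]
    rw [h0, h1, Real.norm_eq_abs, Real.norm_eq_abs, sq_abs, sq_abs,
      Real.cos_sq_add_sin_sq, Real.sqrt_one]
  -- rewrite p and q
  obtain ⟨s, hs⟩ : ∃ x : ℝ, x = a - t := ⟨_, rfl⟩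
  have hps : p = s • ahat := by rw [hp, hs, sub_smul]
  have hqs : q = -(s • ahat) := by rw [hq, hs, sub_smul]; abel
  have hsa : |s| ≤ a := by
    rw [abs_le, hs]
    constructor <;> [linarith [htw, hw]; linarith]
  -- the ellipse computation
  obtain ⟨u, hu⟩ : ∃ x : ℝ, x = (inner ℝ z ahat : ℝ) := ⟨_, rfl⟩
  obtain ⟨r, hrr⟩ : ∃ x : ℝ, x = ‖z‖ := ⟨_, rfl⟩
  have hr0 : 0 ≤ r := by rw [hrr]; exact norm_nonneg z
  have har : a ≤ r := by rw [hrr]; exact hrge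
  obtain ⟨d1, hd1⟩ : ∃ x : ℝ, x = ‖z - s • ahat‖ := ⟨_, rfl⟩
  obtain ⟨d2, hd2⟩ : ∃ x : ℝ, x = ‖z + s • ahat‖ := ⟨_, rfl⟩
  have hd10 : 0 ≤ d1 := by rw [hd1]; exact norm_nonneg _
  have hd20 : 0 ≤ d2 := by rw [hd2]; exact norm_nonneg _
  have hns : ‖s • ahat‖ ^ 2 = s ^ 2 := by
    rw [norm_smul, hna, Real.norm_eq_abs, mul_one, sq_abs]
  have h1 : d1 ^ 2 = r ^ 2 - 2 * (s * u) + s ^ 2 := by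
    rw [hd1, norm_sub_sq_real, hns, real_inner_smul_right, ← hrr, ← hu]
    try ring
  have h2 : d2 ^ 2 = r ^ 2 + 2 * (s * u) + s ^ 2 := by
    rw [hd2, norm_add_sq_real, hns, real_inner_smul_right, ← hrr, ← hu]
    try ring
  have huz : u ^ 2 ≤ r ^ 2 := by
    have := abs_real_inner_le_norm z ahat
    rw [hna, mul_one, ← hu, ← hrr] at this
    calc u ^ 2 = |u| ^ 2 := (sq_abs u).symm
      _ ≤ r ^ 2 := by nlinarith [abs_nonneg u]
  have hs2 : s ^ 2 ≤ r ^ 2 := by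
    have h := abs_nonneg s
    calc s ^ 2 = |s| ^ 2 := (sq_abs s).symm
      _ ≤ a ^ 2 := by nlinarith
      _ ≤ r ^ 2 := by nlinarith
  have hprod : r ^ 2 - s ^ 2 ≤ d1 * d2 := by
    have hsq : (d1 * d2) ^ 2 = (r ^ 2 + s ^ 2) ^ 2 - 4 * s ^ 2 * u ^ 2 := by
      rw [mul_pow, h1, h2]; ring
    have h4 : 0 ≤ s ^ 2 * (r ^ 2 - u ^ 2) := mul_nonneg (sq_nonneg s) (by linarith)
    have key : (r ^ 2 - s ^ 2) ^ 2 ≤ (d1 * d2) ^ 2 := by nlinarith [hsq, h4]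
    nlinarith [key, mul_nonneg hd10 hd20, hs2]
  have hsumsq : 4 * a ^ 2 ≤ (d1 + d2) ^ 2 := by
    nlinarith [h1, h2, hprod, har, ha0, hr0]
  have hfinal : 2 * a ≤ d1 + d2 := by
    nlinarith [hsumsq, hd10, hd20, ha0]
  rw [hps, hqs, hw, sub_neg_eq_add, ← hd1, ← hd2]
  exact hfinal
end
end

section
/- Let n ≥ 3 be an odd integer and let P_n be the regular n-gon. Then the double of P_n admits no half-geodesic: there is no L > 0 and no map γ : ℝ → {0,1} × P_n such that D(γ(t+L), γ(t)) = 0 for all t ∈ ℝ and D(γ(s), γ(t)) = |s − t| whenever |s − t| ≤ L/2. -/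
open Real

noncomputable section

namespace NHG

lemma pt_apply0 (a b : ℝ) : (pt a b) 0 = a := rfl
lemma pt_apply1 (a b : ℝ) : (pt a b) 1 = b := rfl

def vert (θ : ℝ) : E2 := pt (Real.cos θ) (Real.sin θ)

lemma inner_pt (a b c d : ℝ) : (inner ℝ (pt a b) (pt c d) : ℝ) = a*c + b*d := by
  simp [pt, PiLp.inner_apply, Fin.sum_univ_two, RCLike.inner_apply]; ring

lemma inner_vert (a b : ℝ) : (inner ℝ (vert a) (vert b) : ℝ) = Real.cos (a - b) := by
  rw [vert, vert, inner_pt, Real.cos_sub]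

lemma norm_vert (a : ℝ) : ‖vert a‖ = 1 := by
  have h : ‖vert a‖^2 = 1 := by
    rw [← real_inner_self_eq_norm_sq, inner_vert]; simp
  nlinarith [norm_nonneg (vert a)]

lemma e2_ext {x y : E2} (h0 : x 0 = y 0) (h1 : x 1 = y 1) : x = y := by
  apply PiLp.ext; intro i; fin_cases i <;> assumption

lemma outNormal_eq_vert (n k : ℕ) : outNormal n k = vert ((2 * (k:ℝ) + 1) * π / n) := rfl

/-- the set of points satisfying all the edge inequalities -/
def Kset (n : ℕ) : Set E2 :=
  {z | ∀ k < n, (inner ℝ z (outNormal n k) : ℝ) ≤ Real.cos (π / n)}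

variable {n : ℕ}

lemma Pgon_eq_hull_vert (n : ℕ) :
    Pgon n = convexHull ℝ (Set.range fun k : Fin n => vert (2 * π * k / n)) := rfl

lemma pi_div_n_pos (hn : 3 ≤ n) : 0 < π / n := by
  apply div_pos Real.pi_pos; exact_mod_cast Nat.lt_of_lt_of_le (by norm_num) hn

lemma pi_div_n_lt (hn : 3 ≤ n) : π / n ≤ π / 3 := by
  apply div_le_div_of_nonneg_left Real.pi_pos.le (by norm_num)
  exact_mod_cast hn

lemma cos_pi_div_n_pos (hn : 3 ≤ n) : 0 < Real.cos (π / n) := by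
  apply Real.cos_pos_of_mem_Ioo
  constructor
  · linarith [pi_div_n_pos hn, Real.pi_pos]
  · calc π / n ≤ π / 3 := pi_div_n_lt hn
      _ < π / 2 := by linarith [Real.pi_pos]

/-- cosine of an odd multiple of π/n is at most cos (π/n) -/
lemma oddcos (hn : 3 ≤ n) (t : ℤ) (ht : Odd t) :
    Real.cos (t * π / n) ≤ Real.cos (π / n) := by
  have hnR : (0:ℝ) < n := by exact_mod_cast Nat.lt_of_lt_of_le (by norm_num) hn
  obtain ⟨l, hl⟩ : ∃ l : ℤ, l = round ((t : ℝ) / (2 * n)) := ⟨_, rfl⟩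
  obtain ⟨s, hs⟩ : ∃ s : ℤ, s = t - 2 * n * l := ⟨_, rfl⟩
  have hsR : (s:ℝ) = (t:ℝ) - 2 * n * l := by rw [hs]; push_cast; ring
  have hsabs : |(s:ℝ)| ≤ n := by
    have h : |(t : ℝ) / (2 * n) - l| ≤ 1/2 := by rw [hl]; exact abs_sub_round _
    have h2 : |(t:ℝ)/(2*n) - l| * (2*n) ≤ (1/2) * (2*n) :=
      mul_le_mul_of_nonneg_right h (by positivity)
    have h3 : |(s:ℝ)| = |(t:ℝ)/(2*n) - l| * (2*n) := by
      have e : (t:ℝ)/(2*n) - l = (s:ℝ)/(2*n) := by rw [hsR]; field_simp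
      rw [e, abs_div, abs_of_pos (show (0:ℝ) < 2*n by positivity)]
      field_simp
    rw [h3]
    linarith
  have hsodd : Odd s := by
    rcases ht with ⟨m, hm⟩
    exact ⟨m - n * l, by rw [hs, hm]; ring⟩
  have hs1 : (1:ℝ) ≤ |(s:ℝ)| := by
    have h0 : s ≠ 0 := by
      intro h0; rw [h0] at hsodd
      exact (Int.not_even_iff_odd.mpr hsodd) Even.zero
    have : 1 ≤ |s| := Int.one_le_abs h0
    exact_mod_cast this
  have key : Real.cos ((t:ℝ) * π / n) = Real.cos (|(s:ℝ)| * π / n) := by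
    have h1 : (t:ℝ) * π / n = (s:ℝ) * π / n + l * (2 * π) := by
      rw [hsR]; field_simp; ring
    rw [h1, Real.cos_add_int_mul_two_pi]
    rcases abs_cases (s:ℝ) with ⟨h, _⟩ | ⟨h, _⟩
    · rw [h]
    · rw [h, show -(s:ℝ) * π / n = -((s:ℝ)*π/n) by ring, Real.cos_neg]
  rw [key]
  apply Real.cos_le_cos_of_nonneg_of_le_pi
  · positivity
  · rw [div_le_iff₀ hnR]
    nlinarith [Real.pi_pos]
  · rw [div_le_div_iff₀ hnR hnR]
    nlinarith [mul_nonneg (mul_nonneg (sub_nonneg.mpr hs1) Real.pi_pos.le) hnR.le]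

/-- vertices of the polygon -/
def Vt (n m : ℕ) : E2 := vert (2 * π * m / n)

lemma Vt_mem {m : ℕ} (hm : m < n) : Vt n m ∈ Pgon n := by
  rw [Pgon_eq_hull_vert]
  exact subset_convexHull ℝ _ ⟨⟨m, hm⟩, rfl⟩

lemma Vt_n_eq (hn : 3 ≤ n) : Vt n n = Vt n 0 := by
  have hnR : (0:ℝ) < n := by exact_mod_cast Nat.lt_of_lt_of_le (by norm_num) hn
  unfold Vt vert
  have h : 2 * π * (n:ℝ) / n = 0 + 2 * π := by field_simp; ring
  rw [h]
  simp

lemma Vt_mem' {m : ℕ} (hn : 3 ≤ n) (hm : m ≤ n) : Vt n m ∈ Pgon n := by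
  rcases Nat.lt_or_ge m n with h | h
  · exact Vt_mem h
  · have : m = n := le_antisymm hm h
    rw [this, Vt_n_eq hn]
    exact Vt_mem (by omega)

lemma convex_Kset (n : ℕ) : Convex ℝ (Kset n) := by
  intro x hx y hy a b ha hb hab
  intro k hk
  have hxk := hx k hk
  have hyk := hy k hk
  rw [inner_add_left, real_inner_smul_left, real_inner_smul_left]
  calc a * (inner ℝ x (outNormal n k) : ℝ) + b * inner ℝ y (outNormal n k)
      ≤ a * Real.cos (π/n) + b * Real.cos (π/n) :=
        add_le_add (mul_le_mul_of_nonneg_left hxk ha) (mul_le_mul_of_nonneg_left hyk hb)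
    _ = Real.cos (π/n) := by rw [← add_mul, hab, one_mul]

lemma Pgon_subset_Kset (hn : 3 ≤ n) : Pgon n ⊆ Kset n := by
  rw [Pgon_eq_hull_vert]
  apply convexHull_min _ (convex_Kset n)
  rintro z ⟨m, rfl⟩ k hk
  rw [outNormal_eq_vert,
    show (fun k : Fin n => vert (2 * π * (k:ℕ) / n)) m = vert (2 * π * ((m:ℕ):ℝ) / n) from rfl,
    inner_vert]
  have h : 2 * π * ((m:Fin n):ℝ) / n - (2 * (k:ℝ) + 1) * π / n
      = ((2 * ((m:Fin n):ℤ) - 2 * (k:ℤ) - 1) : ℤ) * π / n := by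
    push_cast; field_simp; ring
  rw [h]
  exact oddcos hn _ ⟨((m:Fin n):ℤ) - k - 1, by ring⟩

lemma sum_vert_eq_zero (hn : 3 ≤ n) :
    ∑ m ∈ Finset.range n, Vt n m = 0 := by
  have hn0 : (n:ℂ) ≠ 0 := by
    have : (0:ℕ) < n := by omega
    exact_mod_cast this.ne'
  have hnR : (0:ℝ) < n := by exact_mod_cast Nat.lt_of_lt_of_le (by norm_num) hn
  -- complex geometric sum
  set ζ : ℂ := Complex.exp (2 * π / n * Complex.I) with hζ
  have hζn : ζ ^ n = 1 := by
    rw [hζ, ← Complex.exp_nat_mul]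
    rw [show (n:ℂ) * (2 * π / n * Complex.I) = 2 * π * Complex.I by field_simp]
    exact Complex.exp_two_pi_mul_I
  have hζ1 : ζ ≠ 1 := by
    intro h1
    rw [hζ, Complex.exp_eq_one_iff] at h1
    obtain ⟨m, hm⟩ := h1
    rw [show (m:ℂ) * (2 * π * Complex.I) = ((m:ℂ) * (2 * π)) * Complex.I by ring] at hm
    have h2 := mul_right_cancel₀ Complex.I_ne_zero hm
    have hm' : (2 * π / n : ℝ) = m * (2 * π) := by exact_mod_cast h2
    rw [div_eq_iff hnR.ne'] at hm'
    have h1 : 2 * π * ((m:ℝ) * n - 1) = 0 := by linear_combination -hm'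
    have h2π : (2 * π : ℝ) ≠ 0 := by positivity
    have hmn : (m:ℝ) * n = 1 := by
      rcases mul_eq_zero.mp h1 with h | h
      · exact absurd h h2π
      · linarith
    have hmnZ : m * (n:ℤ) = 1 := by exact_mod_cast hmn
    have hdvd : (n:ℤ) ∣ 1 := ⟨m, by linarith [hmnZ]⟩
    have := Int.le_of_dvd one_pos hdvd
    have hn3 : (3:ℤ) ≤ (n:ℤ) := by exact_mod_cast hn
    omega
  have hsum : ∑ m ∈ Finset.range n, ζ ^ m = 0 := by
    rw [geom_sum_eq hζ1, hζn]
    simp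
  have hexp : ∀ m : ℕ, ζ ^ m = Complex.exp ((2 * π * m / n : ℝ) * Complex.I) := by
    intro m
    rw [hζ, ← Complex.exp_nat_mul]
    congr 1
    push_cast
    ring
  have hre : ∀ m : ℕ, (ζ ^ m).re = Real.cos (2 * π * m / n) := by
    intro m; rw [hexp m, Complex.exp_ofReal_mul_I_re]
  have him : ∀ m : ℕ, (ζ ^ m).im = Real.sin (2 * π * m / n) := by
    intro m; rw [hexp m, Complex.exp_ofReal_mul_I_im]
  have hcos : ∑ m ∈ Finset.range n, Real.cos (2 * π * m / n) = 0 := by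
    have := congrArg Complex.re hsum
    rw [Complex.re_sum] at this
    simpa [hre] using this
  have hsin : ∑ m ∈ Finset.range n, Real.sin (2 * π * m / n) = 0 := by
    have := congrArg Complex.im hsum
    rw [Complex.im_sum] at this
    simpa [him] using this
  apply e2_ext
  · rw [show ((0:E2) 0) = 0 from rfl]
    rw [WithLp.ofLp_sum, Finset.sum_apply]
    simpa [Vt, vert, pt_apply0] using hcos
  · rw [show ((0:E2) 1) = 0 from rfl]
    rw [WithLp.ofLp_sum, Finset.sum_apply]
    simpa [Vt, vert, pt_apply1] using hsin

lemma zero_mem_Pgon (hn : 3 ≤ n) : (0:E2) ∈ Pgon n := by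
  have h : (Finset.range n).centerMass (fun _ => (1:ℝ)) (fun m => Vt n m)
      ∈ convexHull ℝ (Set.range fun k : Fin n => vert (2 * π * (k:ℕ) / n)) := by
    apply Finset.centerMass_mem_convexHull _ (fun i _ => zero_le_one)
    · rw [Finset.sum_const, Finset.card_range]
      simp only [nsmul_eq_mul, mul_one]
      exact_mod_cast Nat.lt_of_lt_of_le (by norm_num) hn
    · exact fun m hm => ⟨⟨m, Finset.mem_range.mp hm⟩, rfl⟩
  rw [Finset.centerMass] at h
  rw [Pgon_eq_hull_vert]
  simpa [sum_vert_eq_zero hn] using h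

lemma trig0 (p χ M : ℝ) :
    Real.sin (p+χ) * Real.cos (M-p) + Real.sin (p-χ) * Real.cos (M+p)
      = Real.sin (2*p) * Real.cos (M-χ) := by
  simp only [Real.sin_add, Real.sin_sub, Real.cos_add, Real.cos_sub, Real.sin_two_mul]
  ring

lemma trig1 (p χ M : ℝ) :
    Real.sin (p+χ) * Real.sin (M-p) + Real.sin (p-χ) * Real.sin (M+p)
      = Real.sin (2*p) * Real.sin (M-χ) := by
  simp only [Real.sin_add, Real.sin_sub, Real.cos_add, Real.cos_sub, Real.sin_two_mul]
  ring

lemma polar (z : E2) (hz0 : z ≠ 0) :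
    ∃ r φ : ℝ, 0 < r ∧ 0 ≤ φ ∧ φ < 2*π ∧ z = r • vert φ := by
  set c : ℂ := ⟨z 0, z 1⟩ with hc
  have hcne : c ≠ 0 := by
    intro h
    apply hz0
    have h0 : z 0 = 0 := by
      have := congrArg Complex.re h; simpa [hc] using this
    have h1 : z 1 = 0 := by
      have := congrArg Complex.im h; simpa [hc] using this
    exact e2_ext (by simpa using h0) (by simpa using h1)
  set r := ‖c‖ with hr
  have hrpos : 0 < r := by
    rw [hr]; exact norm_pos_iff.mpr hcne
  have hcos : Real.cos (Complex.arg c) = z 0 / r := Complex.cos_arg hcne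
  have hsin : Real.sin (Complex.arg c) = z 1 / r := Complex.sin_arg c
  have harg := Complex.arg_mem_Ioc c
  have hπ := Real.pi_pos
  by_cases hneg : 0 ≤ Complex.arg c
  · refine ⟨r, Complex.arg c, hrpos, hneg, by linarith [harg.2], ?_⟩
    apply e2_ext
    · show z 0 = r * Real.cos (Complex.arg c)
      rw [hcos]; field_simp
    · show z 1 = r * Real.sin (Complex.arg c)
      rw [hsin]; field_simp
  · push_neg at hneg
    refine ⟨r, Complex.arg c + 2*π, hrpos, by linarith [harg.1], by linarith, ?_⟩
    apply e2_ext
    · show z 0 = r * Real.cos (Complex.arg c + 2*π)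
      rw [Real.cos_add_two_pi, hcos]; field_simp
    · show z 1 = r * Real.sin (Complex.arg c + 2*π)
      rw [Real.sin_add_two_pi, hsin]; field_simp

lemma Kset_subset_Pgon (hn : 3 ≤ n) : Kset n ⊆ Pgon n := by
  intro z hz
  by_cases hz0 : z = 0
  · rw [hz0]; exact zero_mem_Pgon hn
  obtain ⟨r, φ, hr, hφ0, hφ2, hzeq⟩ := polar z hz0
  have hπ := Real.pi_pos
  have hnR : (0:ℝ) < n := by exact_mod_cast Nat.lt_of_lt_of_le (by norm_num) hn
  have hn3R : (3:ℝ) ≤ n := by exact_mod_cast hn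
  -- the sector index
  obtain ⟨m', hm'⟩ : ∃ m' : ℤ, m' = ⌊φ * n / (2*π)⌋ := ⟨_, rfl⟩
  have hm'0 : 0 ≤ m' := by
    rw [hm']; exact Int.floor_nonneg.mpr (by positivity)
  have hm'n : m' < n := by
    rw [hm']
    apply Int.floor_lt.mpr
    push_cast
    rw [div_lt_iff₀ (by positivity)]
    calc φ * n < 2*π*n := by nlinarith
      _ = n * (2*π) := by ring
  obtain ⟨m, hmm⟩ : ∃ m : ℕ, (m:ℤ) = m' := ⟨m'.toNat, Int.toNat_of_nonneg hm'0⟩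
  have hmn : m < n := by exact_mod_cast hmm ▸ hm'n
  have hflo : (m:ℝ) * (2*π/n) ≤ φ := by
    have h1 : (m':ℝ) ≤ φ * n / (2*π) := by rw [hm']; exact_mod_cast Int.floor_le _
    have h2 : (m:ℝ) = (m':ℝ) := by exact_mod_cast hmm
    have h1' : (m':ℝ) * (2*π) ≤ φ * n := by
      rw [le_div_iff₀ (by positivity)] at h1; linarith
    rw [h2, ← mul_div_assoc, div_le_iff₀ hnR]
    linarith
  have hfhi : φ < ((m:ℝ)+1) * (2*π/n) := by
    have h1 : φ * n / (2*π) < (m':ℝ) + 1 := by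
      rw [hm']; push_cast; exact Int.lt_floor_add_one _
    have h2 : (m:ℝ) = (m':ℝ) := by exact_mod_cast hmm
    have h1' : φ * n < ((m':ℝ)+1) * (2*π) := by
      rw [div_lt_iff₀ (by positivity)] at h1; linarith
    rw [h2, ← mul_div_assoc, lt_div_iff₀ hnR]
    linarith
  -- sector parameters
  set p : ℝ := π / n with hp
  have hppos : 0 < p := pi_div_n_pos hn
  have hp2 : 2*p ≤ 2*π/3 := by
    have := pi_div_n_lt hn
    rw [hp]; linarith
  set M : ℝ := (2*(m:ℝ)+1) * π / n with hM
  set χ : ℝ := M - φ with hχ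
  have hMp : M - p = 2 * π * m / n := by rw [hM, hp]; field_simp; ring
  have hMp' : M + p = 2 * π * ((m:ℝ)+1) / n := by rw [hM, hp]; field_simp; ring
  have hχle : χ ≤ p := by
    have : (m:ℝ) * (2*π/n) = M - p := by rw [hMp]; ring
    rw [hχ]; linarith [hflo, this]
  have hχgt : -p < χ := by
    have : ((m:ℝ)+1) * (2*π/n) = M + p := by rw [hMp']; ring
    rw [hχ]; linarith [hfhi, this]
  have hs2p : 0 < Real.sin (2*p) := by
    apply Real.sin_pos_of_pos_of_lt_pi (by linarith)
    linarith
  have hsppos : 0 < Real.sin p := by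
    apply Real.sin_pos_of_pos_of_lt_pi hppos
    linarith
  have hcppos : 0 < Real.cos p := cos_pi_div_n_pos hn
  set c1 : ℝ := r * Real.sin (p+χ) / Real.sin (2*p) with hc1
  set c2 : ℝ := r * Real.sin (p-χ) / Real.sin (2*p) with hc2
  have hc1n : 0 ≤ c1 := by
    rw [hc1]
    apply div_nonneg _ hs2p.le
    apply mul_nonneg hr.le
    apply Real.sin_nonneg_of_nonneg_of_le_pi (by linarith) (by linarith)
  have hc2n : 0 ≤ c2 := by
    rw [hc2]
    apply div_nonneg _ hs2p.le
    apply mul_nonneg hr.le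
    apply Real.sin_nonneg_of_nonneg_of_le_pi (by linarith) (by linarith)
  -- z as a combination of adjacent vertices
  have hφM : φ = M - χ := by rw [hχ]; ring
  have hcombo : z = c1 • Vt n m + c2 • Vt n (m+1) := by
    have hv1 : Vt n m = vert (M - p) := by rw [Vt, hMp]
    have hv2 : Vt n (m+1) = vert (M + p) := by rw [Vt, hMp']; try norm_cast
    rw [hzeq, hφM, hv1, hv2]
    apply e2_ext
    · show r * Real.cos (M - χ) = c1 * Real.cos (M-p) + c2 * Real.cos (M+p)
      rw [hc1, hc2]
      rw [div_mul_eq_mul_div, div_mul_eq_mul_div, ← add_div, eq_div_iff hs2p.ne']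
      linear_combination (-r) * trig0 p χ M
    · show r * Real.sin (M - χ) = c1 * Real.sin (M-p) + c2 * Real.sin (M+p)
      rw [hc1, hc2]
      rw [div_mul_eq_mul_div, div_mul_eq_mul_div, ← add_div, eq_div_iff hs2p.ne']
      linear_combination (-r) * trig1 p χ M
  -- the sum of the coefficients is at most 1
  have hzm := hz m hmn
  have hinner : (inner ℝ z (outNormal n m) : ℝ) = r * Real.cos χ := by
    rw [hzeq, outNormal_eq_vert, real_inner_smul_left, inner_vert]
    have : φ - (2 * (m:ℝ) + 1) * π / n = -χ := by rw [hχ, hM]; ring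
    rw [this, Real.cos_neg]
  have hsum : c1 + c2 ≤ 1 := by
    have hs : Real.sin (p+χ) + Real.sin (p-χ) = 2 * Real.sin p * Real.cos χ := by
      simp only [Real.sin_add, Real.sin_sub]; ring
    have h2p : Real.sin (2*p) = 2 * Real.sin p * Real.cos p := by
      rw [Real.sin_two_mul]
    have hceq : c1 + c2 = r * Real.cos χ / Real.cos p := by
      have h1 : Real.sin p ≠ 0 := ne_of_gt hsppos
      have h2 : Real.cos p ≠ 0 := ne_of_gt hcppos
      rw [hc1, hc2, ← add_div, ← mul_add, hs, h2p]
      field_simp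
    rw [hceq, div_le_one hcppos]
    rw [hinner] at hzm
    rw [hp]
    exact hzm
  -- conclude convexity
  have hP : Convex ℝ (Pgon n) := by
    rw [Pgon_eq_hull_vert]; exact convex_convexHull ℝ _
  have hmem1 : Vt n m ∈ Pgon n := Vt_mem hmn
  have hmem2 : Vt n (m+1) ∈ Pgon n := Vt_mem' hn (by omega)
  by_cases ht0 : c1 + c2 = 0
  · have h1 : c1 = 0 := by linarith
    have h2 : c2 = 0 := by linarith
    rw [hcombo, h1, h2]
    simpa using zero_mem_Pgon hn
  · have htpos : 0 < c1 + c2 := lt_of_le_of_ne (by linarith) (Ne.symm ht0)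
    have hq : (c1/(c1+c2)) • Vt n m + (c2/(c1+c2)) • Vt n (m+1) ∈ Pgon n := by
      apply hP hmem1 hmem2 (div_nonneg hc1n htpos.le) (div_nonneg hc2n htpos.le)
      field_simp
    have hfin : z = (1 - (c1+c2)) • (0:E2)
        + (c1+c2) • ((c1/(c1+c2)) • Vt n m + (c2/(c1+c2)) • Vt n (m+1)) := by
      rw [smul_zero, zero_add, smul_add, smul_smul, smul_smul,
        mul_div_cancel₀ _ (ne_of_gt htpos), mul_div_cancel₀ _ (ne_of_gt htpos)]
      exact hcombo
    rw [hfin]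
    exact hP (zero_mem_Pgon hn) hq (by linarith) htpos.le (by ring)
lemma isClosed_Pgon (n : ℕ) : IsClosed (Pgon n) := by
  rw [Pgon_eq_hull_vert]
  exact ((Set.finite_range _).isCompact_convexHull ℝ).isClosed

lemma norm_outNormal (n k : ℕ) : ‖outNormal n k‖ = 1 := by
  rw [outNormal_eq_vert]; exact norm_vert _

lemma frontier_Pgon_subset (n : ℕ) : frontier (Pgon n) ⊆ Pgon n :=
  (isClosed_Pgon n).frontier_subset

lemma inner_Vt0_outNormal0 (hn : 3 ≤ n) :
    (inner ℝ (Vt n 0) (outNormal n 0) : ℝ) = Real.cos (π / n) := by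
  have h : 2*π*((0:ℕ):ℝ)/n - (2*((0:ℕ):ℝ)+1)*π/n = -(π/n) := by push_cast; ring
  rw [Vt, outNormal_eq_vert, inner_vert, h, Real.cos_neg]

lemma frontier_Pgon_nonempty (hn : 3 ≤ n) : (frontier (Pgon n)).Nonempty := by
  refine ⟨Vt n 0, subset_closure (Vt_mem (by omega)), ?_⟩
  intro hint
  rw [mem_interior_iff_mem_nhds, Metric.mem_nhds_iff] at hint
  obtain ⟨ε, hε, hball⟩ := hint
  have hy : Vt n 0 + (ε/2) • outNormal n 0 ∈ Pgon n := by
    apply hball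
    rw [Metric.mem_ball, dist_eq_norm, add_sub_cancel_left, norm_smul, norm_outNormal]
    rw [Real.norm_eq_abs, abs_of_pos (by linarith)]
    linarith
  have h2 := Pgon_subset_Kset hn hy 0 (by omega)
  rw [inner_add_left, real_inner_smul_left, inner_Vt0_outNormal0 hn,
    real_inner_self_eq_norm_sq, norm_outNormal] at h2
  nlinarith

lemma frontier_active (hn : 3 ≤ n) {A : E2} (hA : A ∈ frontier (Pgon n)) :
    ∃ k, k < n ∧ (inner ℝ A (outNormal n k) : ℝ) = Real.cos (π / n) := by
  have hAP : A ∈ Pgon n := frontier_Pgon_subset n hA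
  have hAK := Pgon_subset_Kset hn hAP
  by_contra hno
  push_neg at hno
  have hlt : ∀ k : Fin n, (inner ℝ A (outNormal n k) : ℝ) < Real.cos (π / n) :=
    fun k => lt_of_le_of_ne (hAK k k.2) (hno k k.2)
  set U : Set E2 := ⋂ k : Fin n, {z | (inner ℝ z (outNormal n k) : ℝ) < Real.cos (π / n)}
    with hU
  have hUopen : IsOpen U := by
    apply isOpen_iInter_of_finite
    intro k
    exact isOpen_lt (Continuous.inner continuous_id continuous_const) continuous_const
  have hUP : U ⊆ Pgon n := by
    intro z hz
    apply Kset_subset_Pgon hn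
    intro k hk
    exact le_of_lt (Set.mem_iInter.mp hz ⟨k, hk⟩)
  have hAU : A ∈ U := Set.mem_iInter.mpr (fun k => hlt k)
  exact hA.2 (interior_maximal hUP hUopen hAU)

lemma ball_subset_Pgon (hn : 3 ≤ n) {c : E2} {δ : ℝ} (hc : c ∈ Pgon n)
    (hb : ∀ z ∈ frontier (Pgon n), δ ≤ ‖c - z‖) {y : E2} (hy : ‖y - c‖ < δ) :
    y ∈ Pgon n := by
  by_contra hyP
  have hyc : y ≠ c := fun h => hyP (h ▸ hc)
  have hd : 0 < ‖y - c‖ := by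
    rw [norm_pos_iff, sub_ne_zero]; exact hyc
  set g : ℝ → E2 := fun θ => c + θ • (y - c) with hg
  set S : Set ℝ := Set.Icc (0:ℝ) 1 ∩ g ⁻¹' (Pgon n) with hS
  have hg0 : g 0 = c := by rw [hg]; simp
  have hg1 : g 1 = y := by rw [hg]; simp
  have hSne : S.Nonempty := ⟨0, ⟨le_refl 0, by norm_num⟩, by rw [Set.mem_preimage, hg0]; exact hc⟩
  have hSbdd : BddAbove S := ⟨1, fun θ hθ => hθ.1.2⟩
  have hgcont : Continuous g := by
    rw [hg]; continuity
  have hSclosed : IsClosed S :=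
    IsClosed.inter isClosed_Icc (IsClosed.preimage hgcont (isClosed_Pgon n))
  set θ : ℝ := sSup S with hθdef
  have hθS : θ ∈ S := hSclosed.csSup_mem hSne hSbdd
  have hθ1 : θ < 1 := by
    rcases lt_or_eq_of_le hθS.1.2 with h | h
    · exact h
    · exfalso; apply hyP; rw [← hg1]
      have := hθS.2
      rw [h] at this
      exact this
  have hfront : g θ ∈ frontier (Pgon n) := by
    constructor
    · exact subset_closure hθS.2
    · intro hint
      rw [mem_interior_iff_mem_nhds, Metric.mem_nhds_iff] at hint
      obtain ⟨ε, hε, hball⟩ := hint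
      set θ' : ℝ := min 1 (θ + ε/(2*‖y - c‖)) with hθ'
      have hθθ' : θ < θ' := by
        apply lt_min hθ1
        have : 0 < ε/(2*‖y - c‖) := by positivity
        linarith
      have hθ'1 : θ' ≤ 1 := min_le_left _ _
      have hθ'0 : 0 ≤ θ' := le_of_lt (lt_of_le_of_lt hθS.1.1 hθθ')
      have hgθ' : g θ' ∈ Pgon n := by
        apply hball
        rw [Metric.mem_ball, dist_eq_norm]
        have hdiff : g θ' - g θ = (θ' - θ) • (y - c) := by
          rw [hg]; simp; rw [← sub_smul]
        rw [hdiff, norm_smul, Real.norm_eq_abs, abs_of_pos (by linarith)]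
        have h2 : θ' - θ ≤ ε/(2*‖y - c‖) := by
          have := min_le_right 1 (θ + ε/(2*‖y - c‖))
          rw [← hθ'] at this
          linarith
        calc (θ' - θ) * ‖y - c‖ ≤ ε/(2*‖y - c‖) * ‖y - c‖ :=
              mul_le_mul_of_nonneg_right h2 (norm_nonneg _)
          _ = ε/2 := by field_simp
          _ < ε := by linarith
      have : θ' ∈ S := ⟨⟨hθ'0, hθ'1⟩, hgθ'⟩
      have := le_csSup hSbdd this
      rw [← hθdef] at this
      linarith
  have hbz := hb _ hfront
  have hcz : ‖c - g θ‖ = θ * ‖y - c‖ := by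
    show ‖c - (c + θ • (y - c))‖ = θ * ‖y - c‖
    rw [sub_add_cancel_left, norm_neg, norm_smul, Real.norm_eq_abs,
      abs_of_nonneg hθS.1.1]
  rw [hcz] at hbz
  have h5 : θ * ‖y - c‖ ≤ ‖y - c‖ := by nlinarith [hθS.1.2, hd.le]
  linarith

lemma unit_normal_of_tangent (hn : 3 ≤ n) {A w : E2} {δ : ℝ} (hδ : 0 < δ)
    {k : ℕ} (hk : k < n) (hAk : (inner ℝ A (outNormal n k) : ℝ) = Real.cos (π/n))
    (hw : ‖w‖ = 1) (hc : A + δ • w ∈ Pgon n)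
    (hball : ∀ z ∈ frontier (Pgon n), δ ≤ ‖(A + δ • w) - z‖) :
    w = - outNormal n k := by
  have hνν : (inner ℝ (outNormal n k) (outNormal n k) : ℝ) = 1 := by
    rw [real_inner_self_eq_norm_sq, norm_outNormal]; norm_num
  have key : ∀ ε : ℝ, 0 < ε → ε < δ → δ * (inner ℝ w (outNormal n k) : ℝ) + ε ≤ 0 := by
    intro ε h1 h2
    have hy : (A + δ • w) + ε • outNormal n k ∈ Pgon n := by
      apply ball_subset_Pgon hn hc hball
      rw [add_sub_cancel_left, norm_smul, norm_outNormal, Real.norm_eq_abs,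
        abs_of_pos h1]
      linarith
    have hK := Pgon_subset_Kset hn hy k hk
    rw [inner_add_left, inner_add_left, real_inner_smul_left, real_inner_smul_left,
      hνν, hAk] at hK
    linarith
  have h1 : (inner ℝ w (outNormal n k) : ℝ) ≤ -1 := by
    by_contra hcon
    push_neg at hcon
    set C : ℝ := -(δ * (inner ℝ w (outNormal n k) : ℝ)) with hC
    have hCδ : C < δ := by
      rw [hC]
      nlinarith
    rcases le_or_gt C 0 with h | h
    · have := key (δ/2) (by linarith) (by linarith)
      rw [hC] at *
      linarith
    · have := key ((C+δ)/2) (by linarith) (by linarith)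
      rw [hC] at *
      linarith
  have h3 : ‖w + outNormal n k‖^2 ≤ 0 := by
    rw [norm_add_sq_real, hw, norm_outNormal]
    nlinarith
  have h4 : w + outNormal n k = 0 := by
    rw [← norm_eq_zero]
    nlinarith [norm_nonneg (w + outNormal n k)]
  exact eq_neg_of_add_eq_zero_left h4
lemma normals_not_opposite (hn : 3 ≤ n) (hodd : Odd n) {j k : ℕ} :
    outNormal n j ≠ - outNormal n k := by
  intro h
  have hnR : (0:ℝ) < n := by exact_mod_cast Nat.lt_of_lt_of_le (by norm_num) hn
  set θj : ℝ := (2*(j:ℝ)+1)*π/n with hθj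
  set θk : ℝ := (2*(k:ℝ)+1)*π/n with hθk
  have h0 : Real.cos θj = - Real.cos θk := by
    have := congrArg (fun v : E2 => v 0) h
    simpa [outNormal, pt] using this
  have h1 : Real.sin θj = - Real.sin θk := by
    have := congrArg (fun v : E2 => v 1) h
    simpa [outNormal, pt] using this
  have hcos : Real.cos (θj - θk) = -1 := by
    rw [Real.cos_sub, h0, h1]
    nlinarith [Real.sin_sq_add_cos_sq θk]
  have hdouble : θj - θk = 2 * (((j:ℝ)-k)*π/n) := by
    rw [hθj, hθk]; field_simp; ring
  have hhalf : Real.cos (((j:ℝ)-k)*π/n) = 0 := by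
    have hd := Real.cos_two_mul (((j:ℝ)-k)*π/n)
    rw [← hdouble, hcos] at hd
    nlinarith [Real.sin_sq_add_cos_sq (((j:ℝ)-k)*π/n),
      sq_nonneg (Real.cos (((j:ℝ)-k)*π/n))]
  rw [Real.cos_eq_zero_iff] at hhalf
  obtain ⟨l, hl⟩ := hhalf
  have hπ0 : (π:ℝ) ≠ 0 := Real.pi_ne_zero
  have h2 : 2*((j:ℝ)-k) = (n:ℝ)*(2*l+1) := by
    rw [div_eq_div_iff hnR.ne' (by norm_num : (2:ℝ) ≠ 0)] at hl
    apply mul_right_cancel₀ hπ0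
    linear_combination hl
  have hZ : 2*((j:ℤ)-k) = (n:ℤ)*(2*l+1) := by exact_mod_cast h2
  have hoddr : Odd ((n:ℤ)*(2*l+1)) :=
    Odd.mul (by exact_mod_cast hodd) ⟨l, by ring⟩
  rw [← hZ] at hoddr
  exact (Int.not_odd_iff_even.mpr ⟨(j:ℤ)-k, by ring⟩) hoddr

/-- a point at prescribed distances along a segment -/
lemma seg_param {p q r : E2} {d1 d2 : ℝ} (h1 : dist p r = d1) (h2 : dist r q = d2)
    (h3 : dist p q = d1 + d2) (hpos : 0 < d1 + d2) :
    r = p + (d1 / (d1 + d2)) • (q - p) := by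
  have hw : Wbtw ℝ p r q := by
    rw [← dist_add_dist_eq_iff, h1, h2, h3]
  rw [← mem_segment_iff_wbtw] at hw
  obtain ⟨a, b, ha, hb, hab, hr⟩ := hw
  have hd1 : dist p r = b * dist p q := by
    rw [← hr]
    have hee : a • p + b • q - p = b • (q - p) := by
      rw [smul_sub]
      have : a = 1 - b := by linarith
      rw [this, sub_smul, one_smul]
      abel
    rw [dist_eq_norm, dist_eq_norm, norm_sub_rev p _, hee, norm_smul,
      Real.norm_eq_abs, abs_of_nonneg hb, norm_sub_rev]
  rw [h1, h3] at hd1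
  have hbval : b = d1 / (d1 + d2) := by
    field_simp
    linarith
  rw [← hr, ← hbval]
  have : a = 1 - b := by linarith
  rw [this, sub_smul, one_smul, smul_sub]
  abel
end NHG

open NHG in
set_option maxHeartbeats 2000000 in
/-- For odd `n ≥ 3`, the double of the regular `n`-gon admits no
half-geodesic: there is no `L > 0` and no curve `γ : ℝ → {0,1} × P_n` that is
`L`-periodic for `D` and minimizes on all subintervals of length `L/2`. -/
theorem odd_doubled_polygon_no_half_geodesic
    (n : ℕ) (hn : 3 ≤ n) (hodd : Odd n) :
    ¬ ∃ (L : ℝ) (γ : ℝ → Bool × E2), 0 < L ∧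
      (∀ t : ℝ, (γ t).2 ∈ Pgon n) ∧
      (∀ t : ℝ, doubleDist (Pgon n) (γ (t + L)) (γ t) = 0) ∧
      (∀ s t : ℝ, |s - t| ≤ L / 2 →
        doubleDist (Pgon n) (γ s) (γ t) = |s - t|) := by
  rintro ⟨L, γ, hL, hmem, hper, hmin⟩
  have hfront_ne := frontier_Pgon_nonempty hn
  set x : ℝ → E2 := fun t => (γ t).2 with hxdef
  have hx : ∀ s, (γ s).2 = x s := fun s => rfl
  -- lower bound for the double distance
  have hbdd : ∀ s t : ℝ,
      BddBelow ((fun z => ‖x s - z‖ + ‖z - x t‖) '' frontier (Pgon n)) := by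
    intro s t
    refine ⟨0, ?_⟩
    rintro v ⟨z, hz, rfl⟩
    positivity
  have hlow : ∀ s t : ℝ, ‖x s - x t‖ ≤ doubleDist (Pgon n) (γ s) (γ t) := by
    intro s t
    by_cases h : (γ s).1 = (γ t).1
    · simp only [doubleDist, if_pos h, hx]
      exact le_refl _
    · simp only [doubleDist, if_neg h, hx]
      apply le_csInf (hfront_ne.image _)
      rintro v ⟨z, hz, rfl⟩
      calc ‖x s - x t‖ = ‖(x s - z) + (z - x t)‖ := by rw [sub_add_sub_cancel]
        _ ≤ ‖x s - z‖ + ‖z - x t‖ := norm_add_le _ _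
  -- periodicity of the spatial part
  have hxper : ∀ t : ℝ, x (t + L) = x t := by
    intro t
    have h2 := hlow (t + L) t
    rw [hper t] at h2
    rw [← sub_eq_zero, ← norm_le_zero_iff]
    exact h2
  have habs : ∀ s t : ℝ, |s - t| ≤ L/2 → ‖x s - x t‖ ≤ |s - t| := by
    intro s t h
    rw [← hmin s t h]
    exact hlow s t
  -- exact distances from a boundary point
  have hpin : ∀ u s : ℝ, x u ∈ frontier (Pgon n) → |s - u| ≤ L/2 →
      ‖x s - x u‖ = |s - u| := by
    intro u s hu hsu
    have hd := hmin s u hsu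
    by_cases h : (γ s).1 = (γ u).1
    · simp only [doubleDist, if_pos h, hx] at hd
      exact hd
    · simp only [doubleDist, if_neg h, hx] at hd
      have hle : sInf ((fun z => ‖x s - z‖ + ‖z - x u‖) '' frontier (Pgon n))
          ≤ ‖x s - x u‖ := by
        have h2 := csInf_le (hbdd s u) (Set.mem_image_of_mem _ hu)
        simpa using h2
      have hge : ‖x s - x u‖
          ≤ sInf ((fun z => ‖x s - z‖ + ‖z - x u‖) '' frontier (Pgon n)) := by
        apply le_csInf (hfront_ne.image _)
        rintro v ⟨z, hz, rfl⟩
        calc ‖x s - x u‖ = ‖(x s - z) + (z - x u)‖ := by rw [sub_add_sub_cancel]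
          _ ≤ ‖x s - z‖ + ‖z - x u‖ := norm_add_le _ _
      rw [← hd]
      linarith
  -- existence of a boundary time
  have hL2 : 0 < L/2 := by linarith
  have hL4 : 0 < L/4 := by linarith
  obtain ⟨u, hu⟩ : ∃ u : ℝ, x u ∈ frontier (Pgon n) := by
    by_contra hno
    push_neg at hno
    -- the face is locally constant
    have hopen : ∀ t0 : Bool, IsOpen {s : ℝ | (γ s).1 = t0} := by
      intro t0
      rw [Metric.isOpen_iff]
      intro s hs
      have hρ : 0 < Metric.infDist (x s) (frontier (Pgon n)) := by
        rw [← (IsClosed.notMem_iff_infDist_pos isClosed_frontier hfront_ne)]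
        exact hno s
      refine ⟨min (Metric.infDist (x s) (frontier (Pgon n))) (L/2), by positivity, ?_⟩
      intro s' hs'
      rw [Metric.mem_ball, Real.dist_eq] at hs'
      show (γ s').1 = t0
      rw [← hs]
      by_contra hne
      have hd := hmin s' s (le_of_lt (lt_of_lt_of_le hs' (min_le_right _ _)))
      simp only [doubleDist, if_neg hne, hx] at hd
      have hge : Metric.infDist (x s) (frontier (Pgon n))
          ≤ sInf ((fun z => ‖x s' - z‖ + ‖z - x s‖) '' frontier (Pgon n)) := by
        apply le_csInf (hfront_ne.image _)
        rintro v ⟨z, hz, rfl⟩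
        have h2 : Metric.infDist (x s) (frontier (Pgon n)) ≤ dist (x s) z :=
          Metric.infDist_le_dist_of_mem hz
        rw [dist_eq_norm, norm_sub_rev] at h2
        have h3 : (0:ℝ) ≤ ‖x s' - z‖ := norm_nonneg _
        show Metric.infDist (x s) (frontier (Pgon n)) ≤ ‖x s' - z‖ + ‖z - x s‖
        linarith
      rw [hd] at hge
      have := lt_of_lt_of_le hs' (min_le_left _ _)
      linarith
    have hconst : ∀ s t : ℝ, (γ s).1 = (γ t).1 := by
      intro s t
      have hclopen : IsClopen {u : ℝ | (γ u).1 = (γ t).1} := by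
        constructor
        · have : {u : ℝ | (γ u).1 = (γ t).1}ᶜ = {u : ℝ | (γ u).1 = !(γ t).1} := by
            ext v
            simp [Bool.eq_not_iff]
          rw [← isOpen_compl_iff, this]
          exact hopen _
        · exact hopen _
      rcases isClopen_iff.mp hclopen with h | h
      · exfalso
        have : t ∈ {u : ℝ | (γ u).1 = (γ t).1} := rfl
        rw [h] at this
        exact this
      · have : s ∈ {u : ℝ | (γ u).1 = (γ t).1} := by rw [h]; trivial
        exact this
    have hsame : ∀ s t : ℝ, |s - t| ≤ L/2 → ‖x s - x t‖ = |s - t| := by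
      intro s t h
      have hd := hmin s t h
      simp only [doubleDist, if_pos (hconst s t), hx] at hd
      exact hd
    -- four-point contradiction
    have e02 : dist (x 0) (x (L/2)) = L/2 := by
      rw [dist_eq_norm, norm_sub_rev]
      rw [hsame (L/2) 0 (by rw [sub_zero, abs_of_pos hL2])]
      rw [sub_zero, abs_of_pos hL2]
    have e01 : dist (x 0) (x (L/4)) = L/4 := by
      rw [dist_eq_norm, norm_sub_rev]
      rw [hsame (L/4) 0 (by rw [sub_zero, abs_of_pos hL4]; linarith)]
      rw [sub_zero, abs_of_pos hL4]
    have e12 : dist (x (L/4)) (x (L/2)) = L/4 := by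
      rw [dist_eq_norm]
      rw [hsame (L/4) (L/2) (by rw [show L/4 - L/2 = -(L/4) by ring, abs_neg, abs_of_pos hL4]; linarith)]
      rw [show L/4 - L/2 = -(L/4) by ring, abs_neg, abs_of_pos hL4]
    have e23 : dist (x (L/2)) (x (3*L/4)) = L/4 := by
      rw [dist_eq_norm, norm_sub_rev]
      rw [hsame (3*L/4) (L/2) (by rw [show 3*L/4 - L/2 = L/4 by ring, abs_of_pos hL4]; linarith)]
      rw [show 3*L/4 - L/2 = L/4 by ring, abs_of_pos hL4]
    have hxL : x L = x 0 := by
      have := hxper 0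
      rw [zero_add] at this
      exact this
    have e34 : dist (x (3*L/4)) (x L) = L/4 := by
      rw [dist_eq_norm, norm_sub_rev]
      rw [hsame L (3*L/4) (by rw [show L - 3*L/4 = L/4 by ring, abs_of_pos hL4]; linarith)]
      rw [show L - 3*L/4 = L/4 by ring, abs_of_pos hL4]
    have e24 : dist (x (L/2)) (x L) = L/4 + L/4 := by
      rw [hxL, dist_comm, e02]; ring
    have hp1 := seg_param e01 e12 (by rw [e02]; ring) (by linarith)
    have hp3 := seg_param e23 e34 e24 (by linarith)
    rw [hxL] at hp3
    have h13 : ‖x (L/4) - x (3*L/4)‖ = L/2 := by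
      rw [hsame (L/4) (3*L/4) (by rw [show L/4 - 3*L/4 = -(L/2) by ring, abs_neg, abs_of_pos hL2])]
      rw [show L/4 - 3*L/4 = -(L/2) by ring, abs_neg, abs_of_pos hL2]
    have hzero : x (L/4) - x (3*L/4) = 0 := by
      rw [hp1, hp3]
      have hc : L/4 / (L/4 + L/4) = (1:ℝ)/2 := by
        rw [show L/4 + L/4 = L/2 by ring]
        field_simp
        ring
      rw [hc]
      module
    rw [hzero, norm_zero] at h13
    linarith
  -- the chord structure around the boundary time u
  set A : E2 := x u with hA
  set B : E2 := x (u + L/2) with hB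
  have hABn : ‖B - A‖ = L/2 := by
    rw [hB, hA]
    have := hpin u (u + L/2) hu (by rw [add_sub_cancel_left, abs_of_pos hL2])
    rw [add_sub_cancel_left, abs_of_pos hL2] at this
    exact this
  set w : E2 := (2/L) • (B - A) with hw
  have hwn : ‖w‖ = 1 := by
    rw [hw, norm_smul, hABn, Real.norm_eq_abs, abs_of_pos (by positivity)]
    field_simp
  have hBA : B = A + (L/2) • w := by
    rw [hw, smul_smul, show (L/2) * (2/L) = 1 by field_simp, one_smul,
      add_sub_cancel]
  have hseg : ∀ s : ℝ, |s| ≤ L/2 → x (u + s) = A + |s| • w := by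
    intro s hs
    have hsle := (abs_le.mp hs).2
    have hsge := (abs_le.mp hs).1
    have hd1 : dist A (x (u + s)) = |s| := by
      rw [dist_eq_norm, norm_sub_rev, hA]
      have := hpin u (u+s) hu (by rw [add_sub_cancel_left]; exact hs)
      rw [add_sub_cancel_left] at this
      exact this
    have hdAB : dist A B = |s| + (L/2 - |s|) := by
      rw [dist_eq_norm, norm_sub_rev, hABn]; ring
    have htri : L/2 ≤ dist A (x (u+s)) + dist (x (u+s)) B := by
      have h2 := dist_triangle A (x (u+s)) B
      rw [hdAB] at h2
      linarith
    have hd2 : dist (x (u+s)) B = L/2 - |s| := by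
      apply le_antisymm _ (by rw [hd1] at htri; linarith)
      rcases le_or_gt 0 s with hs0 | hs0
      · have h3 := habs (u+s) (u + L/2)
          (by rw [show u + s - (u + L/2) = -(L/2 - s) by ring, abs_neg,
                abs_of_nonneg (by linarith)]; linarith)
        rw [show u + s - (u + L/2) = -(L/2 - s) by ring, abs_neg,
          abs_of_nonneg (by linarith)] at h3
        rw [dist_eq_norm, hB, abs_of_nonneg hs0]
        exact h3
      · have hBneg : x (u - L/2) = B := by
          have h4 := hxper (u - L/2)
          rw [show u - L/2 + L = u + L/2 by ring] at h4
          rw [hB, ← h4]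
        have h3 := habs (u+s) (u - L/2)
          (by rw [show u + s - (u - L/2) = L/2 + s by ring,
                abs_of_nonneg (by linarith)]; linarith)
        rw [show u + s - (u - L/2) = L/2 + s by ring,
          abs_of_nonneg (by linarith)] at h3
        rw [dist_eq_norm, ← hBneg, abs_of_neg hs0]
        calc ‖x (u+s) - x (u - L/2)‖ ≤ L/2 + s := h3
          _ = L/2 - -s := by ring
    have hsp := seg_param hd1 hd2 hdAB (by linarith)
    rw [hsp, hw, smul_smul]
    congr 2
    rw [show |s| + (L/2 - |s|) = L/2 by ring]
    rw [div_eq_mul_inv, inv_div]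
  have hxrev : ∀ δ : ℝ, 0 ≤ δ → δ ≤ L/2 →
      x (u + δ) = A + δ • w ∧ x (u - δ) = A + δ • w := by
    intro δ h0 h2
    constructor
    · have h3 := hseg δ (by rw [abs_of_nonneg h0]; exact h2)
      rwa [abs_of_nonneg h0] at h3
    · have h3 := hseg (-δ) (by rw [abs_neg, abs_of_nonneg h0]; exact h2)
      rw [abs_neg, abs_of_nonneg h0, show u + -δ = u - δ by ring] at h3
      exact h3
  -- key metric consequence at a reversal point
  have hpair : ∀ (c : E2) (s1 s2 δ : ℝ), 0 < δ → 2*δ ≤ L/2 → s2 - s1 = 2*δ →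
      x s1 = c → x s2 = c →
      (∀ z ∈ frontier (Pgon n), δ ≤ ‖c - z‖) ∧
      (∃ z ∈ frontier (Pgon n), ‖c - z‖ < 2*δ) := by
    intro c s1 s2 δ hδ hδL hs12 h1 h2
    have habs12 : |s1 - s2| = 2*δ := by
      rw [show s1 - s2 = -(2*δ) by linarith, abs_neg, abs_of_pos (by linarith)]
    have hd := hmin s1 s2 (by rw [habs12]; exact hδL)
    rw [habs12] at hd
    by_cases hface : (γ s1).1 = (γ s2).1
    · exfalso
      simp only [doubleDist, if_pos hface, hx] at hd
      rw [h1, h2, sub_self, norm_zero] at hd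
      linarith
    · simp only [doubleDist, if_neg hface, hx] at hd
      rw [h1, h2] at hd
      have hbdd' : BddBelow ((fun z => ‖c - z‖ + ‖z - c‖) '' frontier (Pgon n)) := by
        refine ⟨0, ?_⟩
        rintro v ⟨z, hz, rfl⟩
        positivity
      constructor
      · intro z hz
        have hle := csInf_le hbdd' (Set.mem_image_of_mem _ hz)
        rw [hd] at hle
        have h4 : ‖z - c‖ = ‖c - z‖ := norm_sub_rev _ _
        show δ ≤ ‖c - z‖
        rw [h4] at hle
        linarith
      · obtain ⟨v, hvmem, hv⟩ := exists_lt_of_csInf_lt (hfront_ne.image _)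
          (show sInf ((fun z => ‖c - z‖ + ‖z - c‖) '' frontier (Pgon n)) < 2*δ + δ by
            rw [hd]; linarith)
        obtain ⟨z, hz, rfl⟩ := hvmem
        refine ⟨z, hz, ?_⟩
        have hv' : ‖c - z‖ + ‖z - c‖ < 2*δ + δ := hv
        have h4 : ‖z - c‖ = ‖c - z‖ := norm_sub_rev _ _
        rw [h4] at hv'
        linarith
  -- tangency at A
  have hkA : ∀ δ : ℝ, 0 < δ → δ ≤ L/4 →
      ∀ z ∈ frontier (Pgon n), δ ≤ ‖(A + δ • w) - z‖ := by
    intro δ h1 h2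
    have hrev := hxrev δ h1.le (by linarith)
    exact (hpair (A + δ • w) (u - δ) (u + δ) δ h1 (by linarith) (by ring)
      hrev.2 hrev.1).1
  -- tangency at B
  have hxB1 : ∀ δ : ℝ, 0 ≤ δ → δ ≤ L/2 → x (u + L/2 - δ) = B - δ • w := by
    intro δ h1 h2
    have h3 := (hxrev (L/2 - δ) (by linarith) (by linarith)).1
    rw [show u + (L/2 - δ) = u + L/2 - δ by ring] at h3
    rw [h3, hBA]
    module
  have hxB2 : ∀ δ : ℝ, 0 ≤ δ → δ ≤ L/2 → x (u + L/2 + δ) = B - δ • w := by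
    intro δ h1 h2
    have hper' : x (u + L/2 + δ) = x (u - (L/2 - δ)) := by
      have h4 := hxper (u - (L/2 - δ))
      rw [show u - (L/2 - δ) + L = u + L/2 + δ by ring] at h4
      exact h4
    rw [hper', (hxrev (L/2 - δ) (by linarith) (by linarith)).2, hBA]
    module
  have hkB : ∀ δ : ℝ, 0 < δ → δ ≤ L/4 →
      (∀ z ∈ frontier (Pgon n), δ ≤ ‖(B - δ • w) - z‖) ∧
      (∃ z ∈ frontier (Pgon n), ‖(B - δ • w) - z‖ < 2*δ) := by
    intro δ h1 h2
    exact hpair (B - δ • w) (u + L/2 - δ) (u + L/2 + δ) δ h1 (by linarith)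
      (by ring) (hxB1 δ h1.le (by linarith)) (hxB2 δ h1.le (by linarith))
  -- B is on the boundary
  have hBfront : B ∈ frontier (Pgon n) := by
    by_contra hBf
    have hρ : 0 < Metric.infDist B (frontier (Pgon n)) := by
      rw [← (IsClosed.notMem_iff_infDist_pos isClosed_frontier hfront_ne)]
      exact hBf
    set ρ := Metric.infDist B (frontier (Pgon n)) with hρdef
    set δ := min (L/4) (ρ/4) with hδdef
    have hδ1 : 0 < δ := by positivity
    obtain ⟨z, hz, hzlt⟩ := (hkB δ hδ1 (min_le_left _ _)).2
    have hdz : dist B z < 3*δ := by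
      calc dist B z ≤ dist B (B - δ • w) + dist (B - δ • w) z := dist_triangle _ _ _
        _ = δ + ‖(B - δ • w) - z‖ := by
            rw [dist_eq_norm, dist_eq_norm, show B - (B - δ • w) = δ • w by abel,
              norm_smul, hwn, Real.norm_eq_abs, abs_of_pos hδ1, mul_one]
        _ < δ + 2*δ := by linarith
        _ = 3*δ := by ring
    have hge : ρ ≤ dist B z := Metric.infDist_le_dist_of_mem hz
    have : δ ≤ ρ/4 := min_le_right _ _
    linarith
  -- conclude via the outward normals
  obtain ⟨k, hk, hAk⟩ := frontier_active hn hu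
  obtain ⟨j, hj, hBj⟩ := frontier_active hn hBfront
  have hcA : A + (L/4) • w ∈ Pgon n := by
    have h3 := (hxrev (L/4) hL4.le (by linarith)).1
    rw [← h3]
    exact hmem _
  have hwk : w = - outNormal n k :=
    unit_normal_of_tangent hn hL4 hk hAk hwn hcA (hkA (L/4) hL4 le_rfl)
  have hcB : B + (L/4) • (-w) ∈ Pgon n := by
    have h3 := hxB1 (L/4) hL4.le (by linarith)
    rw [smul_neg, ← sub_eq_add_neg, ← h3]
    exact hmem _
  have hballB : ∀ z ∈ frontier (Pgon n), L/4 ≤ ‖(B + (L/4) • (-w)) - z‖ := by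
    intro z hz
    have h3 := (hkB (L/4) hL4 le_rfl).1 z hz
    rwa [smul_neg, ← sub_eq_add_neg]
  have hwj : -w = - outNormal n j :=
    unit_normal_of_tangent hn hL4 hj hBj (by rw [norm_neg]; exact hwn) hcB hballB
  have hfinal : outNormal n j = - outNormal n k := by
    rw [← neg_inj.mp hwj, hwk]
  exact normals_not_opposite hn hodd hfinal
end
end

section
/- Let n = 2m with m ≥ 2, let P_n be the regular n-gon, let a = cos(π/n), w = 2a, and let â = (cos(π/n), sin(π/n)) be the unit outward normal to one of the edges. Let x ∈ P_n be a point with ⟨x, â⟩ = 0 (so x lies on the line through the center halfway between the two parallel edges perpendicular to â) and x ≠ (0,0). Then the two copies of x on opposite faces of the double of P_n are at distance strictly less than w: D((0,x),(1,x)) < w. Consequently, a closed curve of period 2w passing through (0,x) and (1,x) at parameters differing by w cannot be a half-geodesic. -/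
open Real

noncomputable section

open RealInnerProductSpace

lemma aux_sin_prod (n : ℕ) (hn : 0 < n) (l : ℤ) :
    0 ≤ Real.sin (l * π / n) * Real.sin ((l + 1) * π / n) := by
  obtain ⟨q, r, hr0, hrn, rfl⟩ : ∃ q r : ℤ, 0 ≤ r ∧ r < (n:ℤ) ∧ l = n * q + r :=
    ⟨l / n, l % n, Int.emod_nonneg _ (by exact_mod_cast hn.ne'), by
      exact_mod_cast Int.emod_lt_of_pos l (by exact_mod_cast hn), (Int.mul_ediv_add_emod l n).symm⟩
  have hne : (n:ℝ) ≠ 0 := by positivity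
  have h1 : ((n * q + r : ℤ) : ℝ) * π / n = r * π / n + q * π := by
    push_cast; field_simp; ring
  have h2 : ((n * q + r + 1 : ℤ) : ℝ) * π / n = (r + 1) * π / n + q * π := by
    push_cast; field_simp; ring
  have e1 : Real.sin (((n * q + r : ℤ) : ℝ) * π / n) = (-1)^q * Real.sin ((r:ℝ) * π / n) := by
    rw [h1, Real.sin_add_int_mul_pi]
  have e2 : Real.sin ((((n * q + r : ℤ) : ℝ) + 1) * π / n) = (-1)^q * Real.sin (((r:ℝ) + 1) * π / n) := by
    push_cast
    rw [show ((n:ℝ) * q + r + 1) * π / n = ((r:ℝ) + 1) * π / n + q * π by field_simp; ring,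
      Real.sin_add_int_mul_pi]
  push_cast at e1 e2 ⊢
  rw [e1, e2]
  have hs1 : 0 ≤ Real.sin ((r:ℝ) * π / n) := by
    apply Real.sin_nonneg_of_nonneg_of_le_pi
    · positivity
    · rw [div_le_iff₀ (by positivity)]
      nlinarith [Real.pi_pos, (by exact_mod_cast hrn.le : (r:ℝ) ≤ (n:ℝ))]
  have hs2 : 0 ≤ Real.sin (((r:ℝ) + 1) * π / n) := by
    apply Real.sin_nonneg_of_nonneg_of_le_pi
    · positivity
    · rw [div_le_iff₀ (by positivity)]
      nlinarith [Real.pi_pos, (by exact_mod_cast hrn : (r:ℝ) + 1 ≤ (n:ℝ))]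
  have : ((-1:ℝ))^q * (-1:ℝ)^q = 1 := by
    rw [← zpow_add₀ (by norm_num : (-1:ℝ) ≠ 0)]
    simp [← two_mul]
    exact Even.neg_one_zpow ⟨q, two_mul q⟩
  nlinarith [mul_nonneg hs1 hs2]

lemma aux_cos_odd_le (n : ℕ) (hn : 0 < n) (l : ℤ) :
    Real.cos ((2 * l - 1) * π / n) ≤ Real.cos (π / n) := by
  have hne : (n:ℝ) ≠ 0 := by positivity
  have key := Real.cos_sub_cos (π / n) (((2 * (l:ℝ) - 1)) * π / n)
  have h1 : (π / n + (2 * (l:ℝ) - 1) * π / n) / 2 = l * π / n := by field_simp; ring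
  have h2 : (π / n - (2 * (l:ℝ) - 1) * π / n) / 2 = (1 - l) * π / n := by field_simp; ring
  rw [h1, h2] at key
  have hs : Real.sin ((1 - (l:ℝ)) * π / n) = - Real.sin (((l:ℝ) - 1) * π / n) := by
    rw [← Real.sin_neg]; ring_nf
  have hp := aux_sin_prod n hn (l - 1)
  push_cast at hp
  have : (l:ℝ) - 1 + 1 = l := by ring
  rw [this] at hp
  rw [hs] at key
  nlinarith [key]

lemma pt_zero (x y : ℝ) : pt x y 0 = x := rfl
lemma pt_one (x y : ℝ) : pt x y 1 = y := rfl

lemma inner_pt (a b c d : ℝ) : ⟪pt a b, pt c d⟫ = a * c + b * d := by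
  simp [PiLp.inner_apply, RCLike.inner_apply, Fin.sum_univ_two, pt]
  ring

lemma inner_pt_right (x : E2) (c d : ℝ) : ⟪x, pt c d⟫ = x 0 * c + x 1 * d := by
  simp [PiLp.inner_apply, RCLike.inner_apply, Fin.sum_univ_two, pt]
  ring

lemma norm_pt_sq (a b : ℝ) : ‖pt a b‖^2 = a^2 + b^2 := by
  rw [EuclideanSpace.norm_eq]
  rw [Real.sq_sqrt (by positivity)]
  simp [Fin.sum_univ_two, pt, sq_abs]

lemma norm_unit_pt (a : ℝ) : ‖pt (Real.cos a) (Real.sin a)‖ = 1 := by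
  have := norm_pt_sq (Real.cos a) (Real.sin a)
  rw [Real.cos_sq_add_sin_sq] at this
  nlinarith [norm_nonneg (pt (Real.cos a) (Real.sin a))]

-- generator as ℕ-indexed
def gen (n j : ℕ) : E2 := pt (Real.cos (2 * π * j / n)) (Real.sin (2 * π * j / n))

lemma gen_mem (n j : ℕ) (hn : 0 < n) : gen n j ∈ Pgon n := by
  apply subset_convexHull
  refine ⟨⟨j % n, Nat.mod_lt _ hn⟩, ?_⟩
  have hne : (n:ℝ) ≠ 0 := by positivity
  have hj : (j:ℝ) = n * (j / n : ℕ) + ((j % n : ℕ):ℝ) := by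
    conv_lhs => rw [← Nat.div_add_mod j n]
    push_cast; ring
  have hc : 2 * π * (j:ℝ) / n = 2 * π * ((j % n : ℕ):ℝ) / n + ((j / n : ℕ):ℝ) * (2 * π) := by
    rw [hj]; field_simp; ring
  show pt (Real.cos (2 * π * ((j % n : ℕ):ℝ) / n)) (Real.sin (2 * π * ((j % n : ℕ):ℝ) / n)) = gen n j
  unfold gen
  rw [hc, Real.cos_add_nat_mul_two_pi, Real.sin_add_nat_mul_two_pi]

lemma norm_gen (n j : ℕ) : ‖gen n j‖ = 1 := norm_unit_pt _

lemma Pgon_subset_ball (n : ℕ) : Pgon n ⊆ Metric.closedBall (0 : E2) 1 := by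
  apply convexHull_min _ (convex_closedBall _ _)
  rintro p ⟨j, rfl⟩
  simp only [Metric.mem_closedBall, dist_zero_right]
  exact (norm_unit_pt _).le

lemma edgeMid_eq (n k : ℕ) (hn : 0 < n) :
    Real.cos (π / n) • outNormal n k = (1/2 : ℝ) • gen n k + (1/2 : ℝ) • gen n (k+1) := by
  have hne : (n:ℝ) ≠ 0 := by positivity
  have hA : 2 * π * (k:ℝ) / n = (2 * k + 1) * π / n - π / n := by field_simp; ring
  have hB : 2 * π * ((k:ℕ)+1:ℝ) / n = (2 * k + 1) * π / n + π / n := by field_simp; ring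
  ext i
  fin_cases i <;>
    simp only [PiLp.add_apply, PiLp.smul_apply, smul_eq_mul, outNormal, gen, pt, PiLp.toLp_apply,
      Matrix.cons_val_zero, Matrix.cons_val_one, Matrix.head_cons, Fin.mk_zero, Fin.mk_one]
  · push_cast
    rw [hA, hB, Real.cos_sub, Real.cos_add]; ring
  · push_cast
    rw [hA, hB, Real.sin_sub, Real.sin_add]; ring

lemma edgeMid_mem (n k : ℕ) (hn : 0 < n) : Real.cos (π / n) • outNormal n k ∈ Pgon n := by
  rw [edgeMid_eq n k hn]
  have hc := convex_convexHull ℝ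
    (Set.range fun k : Fin n => pt (Real.cos (2 * π * k / n)) (Real.sin (2 * π * k / n)))
  exact hc (gen_mem n k hn) (gen_mem n (k+1) hn) (by norm_num) (by norm_num) (by norm_num)

lemma support_bound (n k : ℕ) (hn : 0 < n) (y : E2) (hy : y ∈ Pgon n) :
    ⟪y, outNormal n k⟫ ≤ Real.cos (π / n) := by
  have hconv : Convex ℝ {w : E2 | ⟪w, outNormal n k⟫ ≤ Real.cos (π / n)} := by
    apply convex_halfSpace_le
    exact ⟨fun a b => inner_add_left a b _, fun c a => real_inner_smul_left a _ c⟩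
  have hsub : Pgon n ⊆ {w : E2 | ⟪w, outNormal n k⟫ ≤ Real.cos (π / n)} := by
    apply convexHull_min _ hconv
    rintro p ⟨j, rfl⟩
    show ⟪pt _ _, outNormal n k⟫ ≤ _
    unfold outNormal
    rw [inner_pt, show Real.cos (2*π*(j:ℝ)/n) * Real.cos ((2*k+1)*π/n)
        + Real.sin (2*π*(j:ℝ)/n) * Real.sin ((2*k+1)*π/n)
        = Real.cos (2*π*(j:ℝ)/n - (2*k+1)*π/n) by rw [Real.cos_sub]]
    have harg : 2*π*((j:Fin n):ℝ)/n - (2*(k:ℝ)+1)*π/n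
        = (2 * ((j:ℤ) - (k:ℤ) : ℤ) - 1) * π / n := by
      push_cast
      have hne : (n:ℝ) ≠ 0 := by positivity
      field_simp; ring
    rw [harg]
    exact aux_cos_odd_le n hn _
  exact hsub hy

lemma edgeMid_frontier (n k : ℕ) (hn : 0 < n) :
    Real.cos (π / n) • outNormal n k ∈ frontier (Pgon n) := by
  rw [frontier]
  constructor
  · exact subset_closure (edgeMid_mem n k hn)
  · intro hint
    rw [mem_interior_iff_mem_nhds, Metric.mem_nhds_iff] at hint
    obtain ⟨ε, hε, hball⟩ := hint
    set z := Real.cos (π / n) • outNormal n k with hz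
    have hmem : z + (ε/2) • outNormal n k ∈ Pgon n := by
      apply hball
      rw [Metric.mem_ball, dist_eq_norm]
      have : z + (ε/2) • outNormal n k - z = (ε/2) • outNormal n k := by abel
      rw [this, norm_smul, show ‖outNormal n k‖ = 1 from norm_unit_pt _]
      rw [Real.norm_eq_abs, abs_of_pos (by linarith : (0:ℝ) < ε/2)]
      linarith
    have hb := support_bound n k hn _ hmem
    rw [inner_add_left, real_inner_smul_left, real_inner_smul_left,
      real_inner_self_eq_norm_sq] at hb
    rw [show ‖outNormal n k‖ = 1 from norm_unit_pt _] at hb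
    nlinarith

lemma keyS (m : ℕ) (hm : 2 ≤ m) :
    1 < 2 * Real.cos (π / (2*m)) * Real.sin (2 * ((m/2 : ℕ):ℝ) * π / (2*m)) := by
  have hm0 : (0:ℝ) < m := by positivity
  have hpi := Real.pi_pos
  rcases Nat.even_or_odd m with ⟨c, hc⟩ | ⟨c, hc⟩
  · -- m = c + c
    have hc1 : 1 ≤ c := by omega
    have hdiv : m / 2 = c := by omega
    have hang : 2 * ((m/2 : ℕ):ℝ) * π / (2*m) = π / 2 := by
      rw [hdiv, hc]; push_cast
      have : (c:ℝ) ≠ 0 := by positivity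
      field_simp; ring
    rw [hang, Real.sin_pi_div_two]
    have hcos : Real.cos (π/4) ≤ Real.cos (π / (2*m)) := by
      apply Real.cos_le_cos_of_nonneg_of_le_pi
      · positivity
      · linarith [Real.pi_pos]
      · rw [div_le_div_iff₀ (by positivity) (by norm_num)]
        have : (4:ℝ) ≤ 2*m := by
          have : (2:ℝ) ≤ m := by exact_mod_cast hm
          linarith
        nlinarith
    rw [Real.cos_pi_div_four] at hcos
    nlinarith [Real.sq_sqrt (by norm_num : (0:ℝ) ≤ 2), Real.sqrt_nonneg 2]
  · -- m = 2c+1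
    have hc1 : 1 ≤ c := by omega
    have hdiv : m / 2 = c := by omega
    have hang : 2 * ((m/2 : ℕ):ℝ) * π / (2*m) = π / 2 - π / (2*m) := by
      rw [hdiv]
      have h1 : (m:ℝ) = 2*c+1 := by rw [hc]; push_cast; ring
      rw [h1]
      have : (2*(c:ℝ)+1) ≠ 0 := by positivity
      field_simp; ring
    rw [hang, Real.sin_pi_div_two_sub]
    have hcos : Real.cos (π/6) ≤ Real.cos (π / (2*m)) := by
      apply Real.cos_le_cos_of_nonneg_of_le_pi
      · positivity
      · linarith [Real.pi_pos]
      · rw [div_le_div_iff₀ (by positivity) (by norm_num)]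
        have : (6:ℝ) ≤ 2*m := by
          have : (3:ℝ) ≤ m := by exact_mod_cast (by omega : 3 ≤ m)
          linarith
        nlinarith
    rw [Real.cos_pi_div_six] at hcos
    nlinarith [Real.sq_sqrt (by norm_num : (0:ℝ) ≤ 3), Real.sqrt_nonneg 3]

set_option maxHeartbeats 1600000 in
open RealInnerProductSpace in
/-- For `n = 2m` even (`m ≥ 2`), an off-center point `x ≠ 0` of the regular
`n`-gon lying on the line through the center halfway between two parallel
edges (i.e. `⟪x, â⟫ = 0` for the edge normal `â`) has its two copies on
opposite faces of the double at distance strictly less than `w`: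
`D((0,x),(1,x)) < w`. -/
theorem offcenter_halfway_points_closer_than_width
    (m n : ℕ) (hm : 2 ≤ m) (hn : n = 2 * m)
    (a w : ℝ) (ha : a = Real.cos (π / n)) (hw : w = 2 * a)
    (ahat : E2) (hahat : ahat = pt (Real.cos (π / n)) (Real.sin (π / n)))
    (x : E2) (hx : x ∈ Pgon n) (hperp : ⟪x, ahat⟫ = 0) (hx0 : x ≠ 0) :
    doubleDist (Pgon n) (false, x) (true, x) < w := by
  have hn0 : 0 < n := by omega
  have hnR : (0:ℝ) < n := by positivity
  have hpi := Real.pi_pos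
  set θ : ℝ := π / n with hθ
  clear_value θ
  have hθ0 : 0 < θ := by rw [hθ]; positivity
  -- a > 0
  have hθ4 : θ ≤ π / 4 := by
    rw [hθ, div_le_div_iff₀ hnR (by norm_num)]
    have : (4:ℝ) ≤ n := by exact_mod_cast (by omega : 4 ≤ n)
    nlinarith
  have ha0 : 0 < a := by
    rw [ha]
    apply Real.cos_pos_of_mem_Ioo
    constructor <;> linarith
  -- scalar form of hperp
  rw [hahat, inner_pt_right] at hperp
  set t : ℝ := x 1 * Real.cos θ - x 0 * Real.sin θ with ht
  clear_value t
  have hpy := Real.sin_sq_add_cos_sq θ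
  have h0 : x 0 = -(t * Real.sin θ) := by
    rw [ht]; linear_combination Real.cos θ * hperp - x 0 * hpy
  have h1 : x 1 = t * Real.cos θ := by
    rw [ht]; linear_combination Real.sin θ * hperp - x 1 * hpy
  have hxpt : x = pt (x 0) (x 1) := by
    ext i; fin_cases i <;> rfl
  have ht0 : t ≠ 0 := by
    intro h
    apply hx0
    ext i; fin_cases i
    · show x 0 = 0; rw [h0, h]; ring
    · show x 1 = 0; rw [h1, h]; ring
  have hnorm : ‖x‖ ≤ 1 := by
    have := Pgon_subset_ball n hx
    simpa [dist_zero_right] using this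
  have ht1 : t^2 ≤ 1 := by
    have h2 : ‖x‖^2 = t^2 := by
      rw [hxpt, norm_pt_sq, h0, h1]; linear_combination t^2 * hpy
    nlinarith [norm_nonneg x]
  -- the core geometric estimate
  have core : ∀ k : ℕ, t * t - 2 * a * (t * Real.sin (2*(k:ℝ)*π/n)) < 0 →
      ‖x - a • outNormal n k‖ < a := by
    intro k hk
    have hdiff : x - a • outNormal n k
        = pt (x 0 - a * Real.cos ((2*k+1)*π/n)) (x 1 - a * Real.sin ((2*k+1)*π/n)) := by
      ext i
      fin_cases i <;>
        simp only [PiLp.sub_apply, PiLp.smul_apply, smul_eq_mul, outNormal, pt, PiLp.toLp_apply,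
          Matrix.cons_val_zero, Matrix.cons_val_one, Matrix.head_cons, Fin.mk_zero, Fin.mk_one]
    have hsq : ‖x - a • outNormal n k‖^2 < a^2 := by
      rw [hdiff, norm_pt_sq]
      have hpy2 := Real.sin_sq_add_cos_sq ((2*(k:ℝ)+1)*π/n)
      have hsin : Real.sin (2*(k:ℝ)*π/n)
          = Real.sin ((2*(k:ℝ)+1)*π/n) * Real.cos θ - Real.cos ((2*(k:ℝ)+1)*π/n) * Real.sin θ := by
        rw [← Real.sin_sub]
        congr 1
        rw [hθ]; field_simp; ring
      rw [hsin] at hk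
      rw [h0, h1]
      have hexp : (-(t * Real.sin θ) - a * Real.cos ((2*(k:ℝ)+1)*π/n))^2
          + (t * Real.cos θ - a * Real.sin ((2*(k:ℝ)+1)*π/n))^2
          = (t * t - 2 * a * (t * (Real.sin ((2*(k:ℝ)+1)*π/n) * Real.cos θ
              - Real.cos ((2*(k:ℝ)+1)*π/n) * Real.sin θ))) + a^2 := by
        linear_combination t^2 * hpy + a^2 * hpy2
      rw [hexp]
      linarith [hk]
    nlinarith [norm_nonneg (x - a • outNormal n k)]
  -- choose the edge
  have hS := keyS m hm
  rw [show 2*(m:ℝ) = (n:ℝ) by rw [hn]; push_cast; ring, ← hθ] at hS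
  set S : ℝ := Real.sin (2 * ((m/2 : ℕ):ℝ) * π / n) with hSdef
  clear_value S
  rw [← ha] at hS
  set j : ℕ := m / 2 with hj
  clear_value j
  have hsinj : Real.sin (2*(j:ℝ)*π/n) = S := by rw [hSdef, hj]
  have hsinopp : Real.sin (2*((j+m : ℕ):ℝ)*π/n) = -S := by
    have hcast : ((j+m:ℕ):ℝ) = (j:ℝ) + m := by push_cast; ring
    have hang : 2*((j:ℝ)+m)*π/n = 2*(j:ℝ)*π/n + π := by
      rw [hn]; push_cast
      have hm0' : (m:ℝ) ≠ 0 := by positivity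
      field_simp
      try ring
    rw [hcast, hang, Real.sin_add_pi, hsinj]
  have htle : t ≤ 1 ∨ -1 ≤ t := by
    rcases le_or_gt t 1 with h | h
    · exact Or.inl h
    · right; nlinarith [ht1]
  have hz : ∃ k : ℕ, ‖x - a • outNormal n k‖ < a := by
    rcases lt_or_gt_of_ne ht0 with htneg | htpos
    · refine ⟨j + m, core _ ?_⟩
      rw [hsinopp]
      have h1' : -1 ≤ t := by nlinarith [ht1]
      have h2' : 0 < 2*a*S - 1 := by linarith
      nlinarith [mul_pos (neg_pos.mpr htneg) h2']
    · refine ⟨j, core _ ?_⟩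
      rw [hsinj]
      have h1' : t ≤ 1 := by nlinarith [ht1]
      have h2' : 0 < 2*a*S - 1 := by linarith
      nlinarith [mul_pos htpos h2']
  obtain ⟨k, hk⟩ := hz
  -- conclude
  have hfr : a • outNormal n k ∈ frontier (Pgon n) := by
    rw [ha, hθ]; exact edgeMid_frontier n k hn0
  have hred : doubleDist (Pgon n) (false, x) (true, x)
      = sInf ((fun z => ‖x - z‖ + ‖z - x‖) '' frontier (Pgon n)) := by
    simp [doubleDist]
  rw [hred]
  have hbdd : BddBelow ((fun z => ‖x - z‖ + ‖z - x‖) '' frontier (Pgon n)) := by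
    refine ⟨0, ?_⟩
    rintro y ⟨z, _, rfl⟩
    positivity
  have hmem : ‖x - a • outNormal n k‖ + ‖a • outNormal n k - x‖
      ∈ (fun z => ‖x - z‖ + ‖z - x‖) '' frontier (Pgon n) := ⟨_, hfr, rfl⟩
  refine lt_of_le_of_lt (csInf_le hbdd hmem) ?_
  rw [norm_sub_rev (a • outNormal n k) x, hw]
  linarith [hk]
end
end

section
/- Let n ≥ 3 and let P_n be the regular n-gon. Every half-geodesic of the double of P_n passes through a boundary point: if γ : ℝ → {0,1} × P_n satisfies D(γ(t+L), γ(t)) = 0 for all t ∈ ℝ and D(γ(s), γ(t)) = |s − t| whenever |s − t| ≤ L/2, for some L > 0, then there exists t ∈ ℝ such that the second component of γ(t) lies in the frontier ∂P_n. -/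
open Real

noncomputable section

/-- Helper: a point of the segment `[x,y]` at distance `‖y-x‖/2` from `x`
is the midpoint. -/
lemma seg_half_eq_midpoint {x y m : E2} (hm : m ∈ segment ℝ x y)
    (hd : ‖m - x‖ = ‖y - x‖ / 2) (hxy : x ≠ y) :
    m = (1/2 : ℝ) • x + (1/2 : ℝ) • y := by
  obtain ⟨a, b, ha, hb, hab, rfl⟩ := hm
  have hmx : a • x + b • y - x = b • (y - x) := by
    have : a = 1 - b := by linarith
    rw [this]; module
  rw [hmx, norm_smul, Real.norm_eq_abs, abs_of_nonneg hb] at hd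
  have hne : ‖y - x‖ ≠ 0 := by
    simpa [sub_eq_zero] using fun h => hxy h.symm
  have hb2 : b = 1/2 := by
    have := hne
    field_simp at hd
    rcases (norm_ne_zero_iff.mp hne) with h
    nlinarith [norm_pos_iff.mpr (sub_ne_zero.mpr (fun h => hxy h.symm) : y - x ≠ 0)]
  have ha2 : a = 1/2 := by linarith
  rw [ha2, hb2]

/-- In the non-constant-bit case, the point where the bit switches lies on
the frontier. -/
lemma aux_switch (n : ℕ) (L : ℝ) (hL : 0 < L) (γ : ℝ → Bool × E2)
    (hmin : ∀ s t : ℝ, |s - t| ≤ L / 2 →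
      doubleDist (Pgon n) (γ s) (γ t) = |s - t|)
    {s t : ℝ} (hst : s < t) (hb : (γ s).1 ≠ (γ t).1) :
    ∃ c : ℝ, (γ c).2 ∈ frontier (Pgon n) := by
  set S : Set ℝ := {u | u ∈ Set.Icc s t ∧ (γ u).1 = (γ s).1} with hS
  have hsS : s ∈ S := ⟨⟨le_refl s, hst.le⟩, rfl⟩
  have hSne : S.Nonempty := ⟨s, hsS⟩
  have hSbdd : BddAbove S := ⟨t, fun u hu => hu.1.2⟩
  set c := sSup S with hc
  have hsc : s ≤ c := le_csSup hSbdd hsS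
  have hct : c ≤ t := csSup_le hSne fun u hu => hu.1.2
  refine ⟨c, ?_⟩
  -- Claim: for each small ε, there is u with the opposite bit, 0 < |c - u| ≤ ε
  have claim : ∀ ε : ℝ, 0 < ε → ε ≤ L / 2 →
      ∃ u : ℝ, (γ c).1 ≠ (γ u).1 ∧ 0 < |c - u| ∧ |c - u| ≤ ε := by
    intro ε hε hεL
    by_cases hcb : (γ c).1 = (γ s).1
    · -- c has the bit of s; points just above c have the other bit
      have hclt : c < t := lt_of_le_of_ne hct (by
        intro h; exact hb (by rw [← h, hcb]))
      set v := min t (c + ε) with hv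
      have hcv : c < v := lt_min hclt (by linarith)
      have hvt : v ≤ t := min_le_left _ _
      have hvS : v ∉ S := fun hvmem => absurd (le_csSup hSbdd hvmem) (not_le.mpr hcv)
      have hvbit : (γ v).1 ≠ (γ s).1 := by
        intro h
        exact hvS ⟨⟨le_trans hsc hcv.le, hvt⟩, h⟩
      refine ⟨v, fun h => hvbit (h ▸ hcb), ?_, ?_⟩
      · rw [abs_sub_comm, abs_of_pos (by linarith)]; linarith
      · rw [abs_sub_comm, abs_of_pos (by linarith)]
        have : v ≤ c + ε := min_le_right _ _
        linarith
    · -- c has the other bit; points of S just below c have the bit of s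
      obtain ⟨u, huS, hu⟩ := exists_lt_of_lt_csSup hSne (show c - ε < c by linarith)
      have huc : u ≤ c := le_csSup hSbdd huS
      have hune : u ≠ c := by
        intro h; exact hcb (h ▸ huS.2)
      refine ⟨u, fun h => hcb (h ▸ huS.2), ?_, ?_⟩
      · rw [abs_of_nonneg (by linarith)]
        cases lt_or_eq_of_le huc with
        | inl h => linarith
        | inr h => exact absurd h hune
      · rw [abs_of_nonneg (by linarith)]; linarith
  -- From the claim: frontier is nonempty and infDist is ≤ ε for all small ε
  have key : ∀ ε : ℝ, 0 < ε → ε ≤ L / 2 →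
      (frontier (Pgon n)).Nonempty ∧
        Metric.infDist (γ c).2 (frontier (Pgon n)) ≤ ε := by
    intro ε hε hεL
    obtain ⟨u, hbu, hpos, hle⟩ := claim ε hε hεL
    have hdd := hmin c u (le_trans hle hεL)
    rw [doubleDist, if_neg hbu] at hdd
    set T := (fun z => ‖(γ c).2 - z‖ + ‖z - (γ u).2‖) '' frontier (Pgon n) with hT
    have hTne : T.Nonempty := by
      by_contra h
      rw [Set.not_nonempty_iff_eq_empty] at h
      rw [h, Real.sInf_empty] at hdd
      exact absurd hdd.symm (ne_of_gt hpos)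
    obtain ⟨y0, z0, hz0, hy0⟩ : ∃ y0, ∃ z0 ∈ frontier (Pgon n),
        (fun z => ‖(γ c).2 - z‖ + ‖z - (γ u).2‖) z0 = y0 := by
      obtain ⟨y0, hy0⟩ := hTne
      obtain ⟨z0, hz0, hz0'⟩ := hy0
      exact ⟨y0, z0, hz0, hz0'⟩
    constructor
    · exact ⟨z0, hz0⟩
    · have h1 : Metric.infDist (γ c).2 (frontier (Pgon n)) ≤ sInf T := by
        apply le_csInf hTne
        rintro b ⟨z, hz, rfl⟩
        dsimp only
        have := Metric.infDist_le_dist_of_mem (x := (γ c).2) hz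
        rw [dist_eq_norm] at this
        have : Metric.infDist (γ c).2 (frontier (Pgon n)) ≤ ‖(γ c).2 - z‖ := this
        have hz2 : (0:ℝ) ≤ ‖z - (γ u).2‖ := norm_nonneg _
        linarith
      rw [hdd] at h1
      linarith
  have hfne : (frontier (Pgon n)).Nonempty := (key (L/2) (by linarith) le_rfl).1
  have hzero : Metric.infDist (γ c).2 (frontier (Pgon n)) = 0 := by
    by_contra h
    have hpos : 0 < Metric.infDist (γ c).2 (frontier (Pgon n)) :=
      lt_of_le_of_ne Metric.infDist_nonneg (Ne.symm h)
    set d := Metric.infDist (γ c).2 (frontier (Pgon n)) with hd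
    have := (key (min (L/2) (d/2)) (lt_min (by linarith) (by linarith))
      (min_le_left _ _)).2
    have h2 : min (L/2) (d/2) ≤ d/2 := min_le_right _ _
    linarith
  have := (Metric.mem_closure_iff_infDist_zero hfne).mpr hzero
  rwa [isClosed_frontier.closure_eq] at this

/-- Every half-geodesic of the double of the regular `n`-gon (`n ≥ 3`)
passes through a boundary point: if `γ : ℝ → {0,1} × P_n` is `L`-periodic
for `D` and minimizes on all subintervals of length `L/2` for some `L > 0`,
then some point of `γ` lies over the frontier `∂P_n`. -/
theorem half_geodesic_meets_boundary
    (n : ℕ) (hn : 3 ≤ n)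
    (L : ℝ) (hL : 0 < L) (γ : ℝ → Bool × E2)
    (hmem : ∀ t : ℝ, (γ t).2 ∈ Pgon n)
    (hper : ∀ t : ℝ, doubleDist (Pgon n) (γ (t + L)) (γ t) = 0)
    (hmin : ∀ s t : ℝ, |s - t| ≤ L / 2 →
      doubleDist (Pgon n) (γ s) (γ t) = |s - t|) :
    ∃ t : ℝ, (γ t).2 ∈ frontier (Pgon n) := by

  by_cases hbit : ∀ s t : ℝ, (γ s).1 = (γ t).1
  · exfalso
    have key : ∀ s t : ℝ, |s - t| ≤ L / 2 → ‖(γ s).2 - (γ t).2‖ = |s - t| := by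
      intro s t h
      have h2 := hmin s t h
      rwa [doubleDist, if_pos (hbit s t)] at h2
    have hLL : (γ L).2 = (γ 0).2 := by
      have h2 := hper 0
      rw [zero_add, doubleDist, if_pos (hbit L 0)] at h2
      exact sub_eq_zero.mp (norm_eq_zero.mp h2)
    set x := (γ 0).2
    set y := (γ (L/2)).2
    set m1 := (γ (L/4)).2
    set m2 := (γ (3*L/4)).2
    have dxy : ‖y - x‖ = L/2 := by
      have h := key (L/2) 0 (by rw [sub_zero, abs_of_pos (by linarith)])
      rw [sub_zero, abs_of_pos (by linarith)] at h; exact h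
    have dxm1 : ‖m1 - x‖ = L/4 := by
      have h := key (L/4) 0
        (by rw [sub_zero, abs_of_pos (by linarith)]; linarith)
      rw [sub_zero, abs_of_pos (by linarith)] at h; exact h
    have dm1y : ‖y - m1‖ = L/4 := by
      have h := key (L/2) (L/4)
        (by rw [show L/2 - L/4 = L/4 by ring, abs_of_pos (by linarith)]; linarith)
      rw [show L/2 - L/4 = L/4 by ring, abs_of_pos (by linarith)] at h; exact h
    have dym2 : ‖m2 - y‖ = L/4 := by
      have h := key (3*L/4) (L/2)
        (by rw [show 3*L/4 - L/2 = L/4 by ring, abs_of_pos (by linarith)]; linarith)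
      rw [show 3*L/4 - L/2 = L/4 by ring, abs_of_pos (by linarith)] at h; exact h
    have dm2x : ‖m2 - x‖ = L/4 := by
      have h := key L (3*L/4)
        (by rw [show L - 3*L/4 = L/4 by ring, abs_of_pos (by linarith)]; linarith)
      rw [show L - 3*L/4 = L/4 by ring, abs_of_pos (by linarith)] at h
      rw [norm_sub_rev, ← hLL]; exact h
    have dm1m2 : ‖m2 - m1‖ = L/2 := by
      have h := key (3*L/4) (L/4)
        (by rw [show 3*L/4 - L/4 = L/2 by ring, abs_of_pos (by linarith)])
      rw [show 3*L/4 - L/4 = L/2 by ring, abs_of_pos (by linarith)] at h; exact h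
    have hxy : x ≠ y := by
      intro h
      rw [h, sub_self, norm_zero] at dxy
      linarith
    -- m1 is between x and y
    have hm1seg : m1 ∈ segment ℝ x y := by
      have heq : dist x m1 + dist m1 y = dist x y := by
        rw [dist_eq_norm, dist_eq_norm, dist_eq_norm, norm_sub_rev x m1,
          norm_sub_rev m1 y, norm_sub_rev x y, dxm1, dm1y, dxy]; ring
      have := dist_add_dist_eq_iff.mp heq
      exact mem_segment_iff_wbtw.mpr this
    have hm2seg : m2 ∈ segment ℝ x y := by
      have heq : dist x m2 + dist m2 y = dist x y := by
        rw [dist_eq_norm, dist_eq_norm, dist_eq_norm, norm_sub_rev x m2,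
          norm_sub_rev x y, dm2x, dym2, dxy]; ring
      have := dist_add_dist_eq_iff.mp heq
      exact mem_segment_iff_wbtw.mpr this
    have hm1 := seg_half_eq_midpoint hm1seg (by rw [dxm1, dxy]; ring) hxy
    have hm2 := seg_half_eq_midpoint hm2seg (by rw [dm2x, dxy]; ring) hxy
    rw [hm1, hm2, sub_self, norm_zero] at dm1m2
    linarith
  · push_neg at hbit
    obtain ⟨s, t, hst⟩ := hbit
    rcases lt_trichotomy s t with h | h | h
    · exact aux_switch n L hL γ hmin h hst
    · exact absurd (h ▸ rfl) hst
    · exact aux_switch n L hL γ hmin h hst.symm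
end
end
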